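/- arXiv:1306.4833 — 3 statements merged into one kernel-verified Lean document; each statement's English description precedes it below -/
import Mathlib

section
/- Let ξ ∈ (0,1) satisfy |sin(nπξ)| ≥ c/n for all positive integers n, for some c > 0, and let T > 2. Then there exists a constant C > 0 such that for all finitely supported families of real numbers (a_n)_{n≥1} and (b_n)_{n≥1}, ∫_0^T ( ∑_{n≥1} ( a_n cos(nπt) + (b_n/(nπ)) sin(nπt) ) sin(nπξ) )² dt ≥ C ∑_{n≥1} ( a_n²/n² + b_n²/n⁴ ). -/
open Real

lemma intCos (k : ℤ) : ∫ t in (0:ℝ)..2, Real.cos ((k:ℝ) * π * t) =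
    if k = 0 then 2 else 0 := by
  by_cases hk : k = 0
  · simp [hk]
  · have ha : (k:ℝ) * π ≠ 0 := mul_ne_zero (Int.cast_ne_zero.mpr hk) pi_ne_zero
    rw [if_neg hk, intervalIntegral.integral_comp_mul_left Real.cos ha,
      integral_cos]
    have h2 : Real.sin ((k:ℝ)*π*2) = 0 := by
      have := Real.sin_int_mul_pi (2*k)
      push_cast at this
      rw [show (k:ℝ)*π*2 = 2*k*π by ring]; exact this
    simp [h2]

lemma intSin (k : ℤ) : ∫ t in (0:ℝ)..2, Real.sin ((k:ℝ) * π * t) = 0 := by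
  by_cases hk : k = 0
  · simp [hk]
  · have ha : (k:ℝ) * π ≠ 0 := mul_ne_zero (Int.cast_ne_zero.mpr hk) pi_ne_zero
    rw [intervalIntegral.integral_comp_mul_left Real.sin ha, integral_sin]
    have h2 : Real.cos ((k:ℝ)*π*2) = 1 := by
      have := Real.cos_int_mul_two_pi k
      push_cast at this
      rw [show (k:ℝ)*π*2 = k*(2*π) by ring]; exact this
    simp [h2]

lemma orthoCC (n m : ℕ+) : ∫ t in (0:ℝ)..2,
    Real.cos ((n:ℝ)*π*t) * Real.cos ((m:ℝ)*π*t) = if n = m then 1 else 0 := by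
  have key : ∀ t : ℝ, Real.cos ((n:ℝ)*π*t) * Real.cos ((m:ℝ)*π*t) =
      Real.cos ((((n:ℤ)-(m:ℤ) : ℤ) : ℝ)*π*t) / 2 + Real.cos ((((n:ℤ)+(m:ℤ) : ℤ) : ℝ)*π*t) / 2 := by
    intro t
    push_cast
    rw [show ((n:ℝ)-m)*π*t = (n:ℝ)*π*t - (m:ℝ)*π*t by ring,
      show ((n:ℝ)+m)*π*t = (n:ℝ)*π*t + (m:ℝ)*π*t by ring,
      Real.cos_sub, Real.cos_add]
    ring
  simp_rw [key]
  rw [intervalIntegral.integral_add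
      (Continuous.intervalIntegrable (by fun_prop) _ _)
      (Continuous.intervalIntegrable (by fun_prop) _ _),
    intervalIntegral.integral_div, intervalIntegral.integral_div, intCos, intCos]
  have hnm : (n:ℤ) + (m:ℤ) ≠ 0 := by positivity
  rw [if_neg hnm]
  by_cases h : n = m
  · rw [if_pos h, if_pos (by simp [h])]
    norm_num
  · rw [if_neg h, if_neg (by
      intro hh
      exact h (by
        have : (n:ℤ) = m := by linarith [sub_eq_zero.mp hh]
        exact_mod_cast this))]
    norm_num

lemma orthoSS (n m : ℕ+) : ∫ t in (0:ℝ)..2,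
    Real.sin ((n:ℝ)*π*t) * Real.sin ((m:ℝ)*π*t) = if n = m then 1 else 0 := by
  have key : ∀ t : ℝ, Real.sin ((n:ℝ)*π*t) * Real.sin ((m:ℝ)*π*t) =
      Real.cos ((((n:ℤ)-(m:ℤ) : ℤ) : ℝ)*π*t) / 2 - Real.cos ((((n:ℤ)+(m:ℤ) : ℤ) : ℝ)*π*t) / 2 := by
    intro t
    push_cast
    rw [show ((n:ℝ)-m)*π*t = (n:ℝ)*π*t - (m:ℝ)*π*t by ring,
      show ((n:ℝ)+m)*π*t = (n:ℝ)*π*t + (m:ℝ)*π*t by ring,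
      Real.cos_sub, Real.cos_add]
    ring
  simp_rw [key]
  rw [intervalIntegral.integral_sub
      (Continuous.intervalIntegrable (by fun_prop) _ _)
      (Continuous.intervalIntegrable (by fun_prop) _ _),
    intervalIntegral.integral_div, intervalIntegral.integral_div, intCos, intCos]
  have hnm : (n:ℤ) + (m:ℤ) ≠ 0 := by positivity
  rw [if_neg hnm]
  by_cases h : n = m
  · rw [if_pos h, if_pos (by simp [h])]
    norm_num
  · rw [if_neg h, if_neg (by
      intro hh
      exact h (by
        have : (n:ℤ) = m := by linarith [sub_eq_zero.mp hh]
        exact_mod_cast this))]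
    norm_num

lemma orthoSC (n m : ℕ+) : ∫ t in (0:ℝ)..2,
    Real.sin ((n:ℝ)*π*t) * Real.cos ((m:ℝ)*π*t) = 0 := by
  have key : ∀ t : ℝ, Real.sin ((n:ℝ)*π*t) * Real.cos ((m:ℝ)*π*t) =
      Real.sin ((((n:ℤ)+(m:ℤ) : ℤ) : ℝ)*π*t) / 2 + Real.sin ((((n:ℤ)-(m:ℤ) : ℤ) : ℝ)*π*t) / 2 := by
    intro t
    push_cast
    rw [show ((n:ℝ)+m)*π*t = (n:ℝ)*π*t + (m:ℝ)*π*t by ring,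
      show ((n:ℝ)-m)*π*t = (n:ℝ)*π*t - (m:ℝ)*π*t by ring,
      Real.sin_add, Real.sin_sub]
    ring
  simp_rw [key]
  rw [intervalIntegral.integral_add
      (Continuous.intervalIntegrable (by fun_prop) _ _)
      (Continuous.intervalIntegrable (by fun_prop) _ _),
    intervalIntegral.integral_div, intervalIntegral.integral_div, intSin, intSin]
  norm_num

lemma prodInt (ξ : ℝ) (a b : ℕ+ → ℝ) (n m : ℕ+) :
    ∫ t in (0:ℝ)..2,
      ((a n * Real.cos ((n:ℝ)*π*t) + b n / ((n:ℝ)*π) * Real.sin ((n:ℝ)*π*t)) * Real.sin ((n:ℝ)*π*ξ)) *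
      ((a m * Real.cos ((m:ℝ)*π*t) + b m / ((m:ℝ)*π) * Real.sin ((m:ℝ)*π*t)) * Real.sin ((m:ℝ)*π*ξ))
    = if n = m then (a n ^ 2 + (b n / ((n:ℝ)*π)) ^ 2) * Real.sin ((n:ℝ)*π*ξ) ^ 2 else 0 := by
  have key : ∀ t : ℝ,
      ((a n * Real.cos ((n:ℝ)*π*t) + b n / ((n:ℝ)*π) * Real.sin ((n:ℝ)*π*t)) * Real.sin ((n:ℝ)*π*ξ)) *
      ((a m * Real.cos ((m:ℝ)*π*t) + b m / ((m:ℝ)*π) * Real.sin ((m:ℝ)*π*t)) * Real.sin ((m:ℝ)*π*ξ)) =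
      (a n * a m * (Real.sin ((n:ℝ)*π*ξ) * Real.sin ((m:ℝ)*π*ξ))) * (Real.cos ((n:ℝ)*π*t) * Real.cos ((m:ℝ)*π*t))
      + (a n * (b m / ((m:ℝ)*π)) * (Real.sin ((n:ℝ)*π*ξ) * Real.sin ((m:ℝ)*π*ξ))) * (Real.sin ((m:ℝ)*π*t) * Real.cos ((n:ℝ)*π*t))
      + ((b n / ((n:ℝ)*π)) * a m * (Real.sin ((n:ℝ)*π*ξ) * Real.sin ((m:ℝ)*π*ξ))) * (Real.sin ((n:ℝ)*π*t) * Real.cos ((m:ℝ)*π*t))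
      + ((b n / ((n:ℝ)*π)) * (b m / ((m:ℝ)*π)) * (Real.sin ((n:ℝ)*π*ξ) * Real.sin ((m:ℝ)*π*ξ))) * (Real.sin ((n:ℝ)*π*t) * Real.sin ((m:ℝ)*π*t)) := by
    intro t; ring
  simp_rw [key]
  rw [intervalIntegral.integral_add (Continuous.intervalIntegrable (by fun_prop) _ _)
      (Continuous.intervalIntegrable (by fun_prop) _ _),
    intervalIntegral.integral_add (Continuous.intervalIntegrable (by fun_prop) _ _)
      (Continuous.intervalIntegrable (by fun_prop) _ _),
    intervalIntegral.integral_add (Continuous.intervalIntegrable (by fun_prop) _ _)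
      (Continuous.intervalIntegrable (by fun_prop) _ _)]
  simp_rw [intervalIntegral.integral_const_mul]
  rw [orthoCC, orthoSS, orthoSC, orthoSC]
  split_ifs with h
  · subst h; ring
  · ring

/-- weak observability inequality for the string observed at a
point `ξ` with `|sin(nπξ)| ≥ c/n`, in Fourier form, for `T > 2`. -/
theorem weak_observability_string (ξ : ℝ) (hξ : ξ ∈ Set.Ioo (0 : ℝ) 1)
    (c : ℝ) (hc : 0 < c)
    (hsin : ∀ n : ℕ+, c / (n : ℝ) ≤ |Real.sin ((n : ℝ) * Real.pi * ξ)|)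
    (T : ℝ) (hT : 2 < T) :
    ∃ C > 0, ∀ a b : ℕ+ → ℝ,
      (Function.support a).Finite → (Function.support b).Finite →
      C * ∑ᶠ n : ℕ+, (a n ^ 2 / (n : ℝ) ^ 2 + b n ^ 2 / (n : ℝ) ^ 4) ≤
        ∫ t in (0 : ℝ)..T,
          (∑ᶠ n : ℕ+,
            (a n * Real.cos ((n : ℝ) * Real.pi * t)
              + b n / ((n : ℝ) * Real.pi) * Real.sin ((n : ℝ) * Real.pi * t))
            * Real.sin ((n : ℝ) * Real.pi * ξ)) ^ 2 := by
  classical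
  have hπ1 : (1:ℝ) ≤ π ^ 2 := by nlinarith [Real.pi_gt_three]
  refine ⟨c ^ 2 / π ^ 2, by positivity, ?_⟩
  intro a b ha hb
  set s : Finset ℕ+ := (ha.union hb).toFinset with hs
  have hmem : ∀ n : ℕ+, (a n ≠ 0 ∨ b n ≠ 0) → n ∈ s := by
    intro n hn
    simp only [hs, Set.Finite.mem_toFinset, Set.mem_union, Function.mem_support]
    exact hn
  have hF : ∀ t : ℝ,
      (∑ᶠ n : ℕ+, (a n * Real.cos ((n:ℝ) * π * t)
          + b n / ((n:ℝ) * π) * Real.sin ((n:ℝ) * π * t)) * Real.sin ((n:ℝ) * π * ξ)) =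
      ∑ n ∈ s, (a n * Real.cos ((n:ℝ) * π * t)
          + b n / ((n:ℝ) * π) * Real.sin ((n:ℝ) * π * t)) * Real.sin ((n:ℝ) * π * ξ) := by
    intro t
    apply finsum_eq_finset_sum_of_support_subset
    intro n hn
    simp only [Function.mem_support] at hn
    apply hmem
    by_contra h
    push_neg at h
    exact hn (by simp [h.1, h.2])
  have hL : (∑ᶠ n : ℕ+, (a n ^ 2 / (n:ℝ) ^ 2 + b n ^ 2 / (n:ℝ) ^ 4)) =
      ∑ n ∈ s, (a n ^ 2 / (n:ℝ) ^ 2 + b n ^ 2 / (n:ℝ) ^ 4) := by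
    apply finsum_eq_finset_sum_of_support_subset
    intro n hn
    simp only [Function.mem_support] at hn
    apply hmem
    by_contra h
    push_neg at h
    exact hn (by simp [h.1, h.2])
  have hgcont : ∀ n : ℕ+, Continuous (fun t : ℝ =>
      (a n * Real.cos ((n:ℝ) * π * t)
        + b n / ((n:ℝ) * π) * Real.sin ((n:ℝ) * π * t)) * Real.sin ((n:ℝ) * π * ξ)) := by
    intro n; fun_prop
  have hFcont : Continuous (fun t : ℝ => (∑ n ∈ s,
      (a n * Real.cos ((n:ℝ) * π * t)
        + b n / ((n:ℝ) * π) * Real.sin ((n:ℝ) * π * t)) * Real.sin ((n:ℝ) * π * ξ)) ^ 2) := by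
    exact (continuous_finset_sum s (fun n _ => hgcont n)).pow 2
  have hInt2 : ∫ t in (0:ℝ)..2, (∑ n ∈ s,
      (a n * Real.cos ((n:ℝ) * π * t)
        + b n / ((n:ℝ) * π) * Real.sin ((n:ℝ) * π * t)) * Real.sin ((n:ℝ) * π * ξ)) ^ 2 =
      ∑ n ∈ s, (a n ^ 2 + (b n / ((n:ℝ) * π)) ^ 2) * Real.sin ((n:ℝ) * π * ξ) ^ 2 := by
    have expand : ∀ t : ℝ, (∑ n ∈ s,
        (a n * Real.cos ((n:ℝ) * π * t)
          + b n / ((n:ℝ) * π) * Real.sin ((n:ℝ) * π * t)) * Real.sin ((n:ℝ) * π * ξ)) ^ 2 =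
        ∑ n ∈ s, ∑ m ∈ s,
          ((a n * Real.cos ((n:ℝ) * π * t)
            + b n / ((n:ℝ) * π) * Real.sin ((n:ℝ) * π * t)) * Real.sin ((n:ℝ) * π * ξ)) *
          ((a m * Real.cos ((m:ℝ) * π * t)
            + b m / ((m:ℝ) * π) * Real.sin ((m:ℝ) * π * t)) * Real.sin ((m:ℝ) * π * ξ)) := by
      intro t; rw [sq, Finset.sum_mul_sum]
    simp_rw [expand]
    rw [intervalIntegral.integral_finset_sum (fun n _ =>
      Continuous.intervalIntegrable
        (continuous_finset_sum s (fun m _ => (hgcont n).fun_mul (hgcont m))) _ _)]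
    refine Finset.sum_congr rfl (fun n hn => ?_)
    rw [intervalIntegral.integral_finset_sum (fun m _ =>
      Continuous.intervalIntegrable ((hgcont n).fun_mul (hgcont m)) _ _)]
    calc (∑ m ∈ s, ∫ t in (0:ℝ)..2,
          ((a n * Real.cos ((n:ℝ) * π * t)
            + b n / ((n:ℝ) * π) * Real.sin ((n:ℝ) * π * t)) * Real.sin ((n:ℝ) * π * ξ)) *
          ((a m * Real.cos ((m:ℝ) * π * t)
            + b m / ((m:ℝ) * π) * Real.sin ((m:ℝ) * π * t)) * Real.sin ((m:ℝ) * π * ξ)))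
        = ∑ m ∈ s, if n = m then (a n ^ 2 + (b n / ((n:ℝ)*π)) ^ 2) * Real.sin ((n:ℝ)*π*ξ) ^ 2 else 0 :=
          Finset.sum_congr rfl (fun m _ => prodInt ξ a b n m)
      _ = _ := by rw [Finset.sum_ite_eq s n (fun _ => (a n ^ 2 + (b n / ((n:ℝ)*π)) ^ 2) * Real.sin ((n:ℝ)*π*ξ) ^ 2), if_pos hn]
  have hbound : ∀ n ∈ s, c ^ 2 / π ^ 2 * (a n ^ 2 / (n:ℝ) ^ 2 + b n ^ 2 / (n:ℝ) ^ 4) ≤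
      (a n ^ 2 + (b n / ((n:ℝ) * π)) ^ 2) * Real.sin ((n:ℝ) * π * ξ) ^ 2 := by
    intro n _
    have hN : (0:ℝ) < (n:ℝ) := by exact_mod_cast n.pos
    have h1 : (c / (n:ℝ)) ^ 2 ≤ Real.sin ((n:ℝ) * π * ξ) ^ 2 := by
      calc (c / (n:ℝ)) ^ 2 ≤ |Real.sin ((n:ℝ) * π * ξ)| ^ 2 :=
            pow_le_pow_left₀ (by positivity) (hsin n) 2
        _ = _ := sq_abs _
    have h2 : (a n ^ 2 + (b n / ((n:ℝ)*π)) ^ 2) * (c / (n:ℝ)) ^ 2 ≤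
        (a n ^ 2 + (b n / ((n:ℝ)*π)) ^ 2) * Real.sin ((n:ℝ)*π*ξ) ^ 2 :=
      mul_le_mul_of_nonneg_left h1 (by positivity)
    have h3 : (a n ^ 2 + (b n / ((n:ℝ)*π)) ^ 2) * (c / (n:ℝ)) ^ 2
        - c ^ 2 / π ^ 2 * (a n ^ 2 / (n:ℝ) ^ 2 + b n ^ 2 / (n:ℝ) ^ 4)
        = a n ^ 2 * c ^ 2 * (π ^ 2 - 1) / (π ^ 2 * (n:ℝ) ^ 2) := by
      have hπ0 : π ≠ 0 := Real.pi_ne_zero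
      field_simp
      ring
    have h4 : 0 ≤ a n ^ 2 * c ^ 2 * (π ^ 2 - 1) / (π ^ 2 * (n:ℝ) ^ 2) :=
      div_nonneg (mul_nonneg (mul_nonneg (sq_nonneg _) (sq_nonneg _)) (by linarith)) (by positivity)
    linarith
  have hmono : (∫ t in (0:ℝ)..2, (∑ n ∈ s,
      (a n * Real.cos ((n:ℝ) * π * t)
        + b n / ((n:ℝ) * π) * Real.sin ((n:ℝ) * π * t)) * Real.sin ((n:ℝ) * π * ξ)) ^ 2) ≤
      ∫ t in (0:ℝ)..T, (∑ n ∈ s,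
      (a n * Real.cos ((n:ℝ) * π * t)
        + b n / ((n:ℝ) * π) * Real.sin ((n:ℝ) * π * t)) * Real.sin ((n:ℝ) * π * ξ)) ^ 2 := by
    apply intervalIntegral.integral_mono_interval le_rfl (by norm_num) hT.le
    · filter_upwards with t using sq_nonneg _
    · exact hFcont.intervalIntegrable _ _
  calc c ^ 2 / π ^ 2 * ∑ᶠ n : ℕ+, (a n ^ 2 / (n:ℝ) ^ 2 + b n ^ 2 / (n:ℝ) ^ 4)
      = ∑ n ∈ s, c ^ 2 / π ^ 2 * (a n ^ 2 / (n:ℝ) ^ 2 + b n ^ 2 / (n:ℝ) ^ 4) := by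
        rw [hL, Finset.mul_sum]
    _ ≤ ∑ n ∈ s, (a n ^ 2 + (b n / ((n:ℝ) * π)) ^ 2) * Real.sin ((n:ℝ) * π * ξ) ^ 2 :=
        Finset.sum_le_sum hbound
    _ = ∫ t in (0:ℝ)..2, (∑ n ∈ s,
        (a n * Real.cos ((n:ℝ) * π * t)
          + b n / ((n:ℝ) * π) * Real.sin ((n:ℝ) * π * t)) * Real.sin ((n:ℝ) * π * ξ)) ^ 2 := hInt2.symm
    _ ≤ ∫ t in (0:ℝ)..T, (∑ n ∈ s,
        (a n * Real.cos ((n:ℝ) * π * t)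
          + b n / ((n:ℝ) * π) * Real.sin ((n:ℝ) * π * t)) * Real.sin ((n:ℝ) * π * ξ)) ^ 2 := hmono
    _ = _ := by
        apply intervalIntegral.integral_congr
        intro t _
        simp only [hF]
end

section
/- Let ξ ∈ (0,1) satisfy |sin(nπξ)| ≥ c/n for all positive integers n, for some c > 0, and let T > 2. Then there exists a constant C > 0 such that for all finitely supported families of real numbers (a_n)_{n≥1} and (b_n)_{n≥1} there exists a real-valued function v ∈ L²(0,T) with ∫_0^T v(t)² dt ≤ C ∑_{n≥1} ( n⁴ a_n² + n² b_n² ) and such that for every n ≥ 1, 2 sin(nπξ) ∫_0^T v(t) e^{−i n π t} dt = −( b_n + i n π a_n ). -/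
open MeasureTheory Complex

noncomputable def Efun (j : ℤ) (t : ℝ) : ℂ := Complex.exp (Complex.I * j * Real.pi * t)

lemma Efun_cont (j : ℤ) : Continuous (Efun j) := by
  unfold Efun; fun_prop

lemma Efun_mul (p q : ℤ) (t : ℝ) : Efun p t * Efun q t = Efun (p + q) t := by
  unfold Efun; rw [← Complex.exp_add]; congr 1; push_cast; ring

lemma Efun_conj (p : ℤ) (t : ℝ) : (starRingEnd ℂ) (Efun p t) = Efun (-p) t := by
  unfold Efun
  rw [← Complex.exp_conj]; congr 1
  simp only [map_mul, Complex.conj_I, Complex.conj_ofReal, map_intCast]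
  push_cast; ring

lemma Efun_int (j : ℤ) : (∫ t in (0:ℝ)..2, Efun j t) = if j = 0 then 2 else 0 := by
  rcases eq_or_ne j 0 with h | h
  · simp [Efun, h]
  · have hc : (Complex.I * (j : ℂ) * (Real.pi : ℂ)) ≠ 0 := by
      simp [Complex.I_ne_zero, h, Real.pi_ne_zero]
    rw [if_neg h]
    have := integral_exp_mul_complex (a := (0:ℝ)) (b := 2) hc
    unfold Efun
    rw [this]
    have h2 : (Complex.I * (j:ℂ) * (Real.pi:ℂ)) * (2:ℝ) = (j:ℂ) * (2 * Real.pi * Complex.I) := by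
      push_cast; ring
    rw [h2, Complex.exp_int_mul_two_pi_mul_I]
    simp

lemma re_mul_re (z w : ℂ) : z.re * w.re = ((z * w).re + (z * (starRingEnd ℂ) w).re) / 2 := by
  simp only [Complex.mul_re, Complex.conj_re, Complex.conj_im]; ring

lemma intervalIntegral_re (f : ℝ → ℂ) (hf : IntervalIntegrable f MeasureTheory.volume 0 2) :
    (∫ t in (0:ℝ)..2, (f t).re) = (∫ t in (0:ℝ)..2, f t).re := by
  rw [intervalIntegral.integral_of_le (by norm_num : (0:ℝ) ≤ 2),
      intervalIntegral.integral_of_le (by norm_num : (0:ℝ) ≤ 2)]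
  have := _root_.integral_re (μ := volume.restrict (Set.Ioc (0:ℝ) 2)) hf.1
  simpa using this

lemma re_ofReal_complex (z : ℂ) : ((z.re : ℝ) : ℂ) = (z + (starRingEnd ℂ) z) / 2 := by
  rw [Complex.add_conj]; push_cast; ring

/-- moment computation -/
lemma momentInt (s : Finset ℕ+) (m : ℕ+ → ℂ) (n : ℕ+) :
    (∫ t in (0:ℝ)..2,
        ((∑ k ∈ s, (m k * Efun (k : ℤ) t).re : ℝ) : ℂ) * Efun (-(n : ℤ)) t)
      = if n ∈ s then m n else 0 := by
  have key : ∀ t : ℝ,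
      ((∑ k ∈ s, (m k * Efun (k : ℤ) t).re : ℝ) : ℂ) * Efun (-(n : ℤ)) t
        = ∑ k ∈ s, (m k / 2 * Efun ((k : ℤ) - n) t
            + (starRingEnd ℂ) (m k) / 2 * Efun (-((k : ℤ) + n)) t) := by
    intro t
    rw [Complex.ofReal_sum, Finset.sum_mul]
    refine Finset.sum_congr rfl fun k _ => ?_
    rw [re_ofReal_complex, map_mul, Efun_conj]
    have h1 : (m k * Efun (k:ℤ) t + (starRingEnd ℂ) (m k) * Efun (-(k:ℤ)) t) / 2
          * Efun (-(n:ℤ)) t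
        = m k / 2 * (Efun (k:ℤ) t * Efun (-(n:ℤ)) t)
          + (starRingEnd ℂ) (m k) / 2 * (Efun (-(k:ℤ)) t * Efun (-(n:ℤ)) t) := by ring
    rw [h1, Efun_mul, Efun_mul,
      show (k:ℤ) + -(n:ℤ) = (k:ℤ) - (n:ℤ) from by ring,
      show -(k:ℤ) + -(n:ℤ) = -((k:ℤ) + (n:ℤ)) from by ring]
  rw [intervalIntegral.integral_congr (fun t _ => key t)]
  rw [intervalIntegral.integral_finset_sum]
  · have hterm : ∀ k ∈ s,
        (∫ t in (0:ℝ)..2, (m k / 2 * Efun ((k : ℤ) - n) t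
            + (starRingEnd ℂ) (m k) / 2 * Efun (-((k : ℤ) + n)) t))
          = if k = n then m k else 0 := by
      intro k _
      rw [intervalIntegral.integral_add (Continuous.intervalIntegrable (u := fun t => _ * Efun _ t) (continuous_const.mul (Efun_cont _)) _ _)
          (Continuous.intervalIntegrable (u := fun t => _ * Efun _ t) (continuous_const.mul (Efun_cont _)) _ _),
        intervalIntegral.integral_const_mul, intervalIntegral.integral_const_mul,
        Efun_int, Efun_int]
      have h2 : ¬ (-((k : ℤ) + n) = 0) := by
        have hk : (0:ℤ) < (k:ℤ) := by exact_mod_cast k.pos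
        have hn : (0:ℤ) < (n:ℤ) := by exact_mod_cast n.pos
        omega
      rw [if_neg h2]
      by_cases hkn : k = n
      · subst hkn; simp
      · have : ¬ ((k:ℤ) - n = 0) := by
          intro h
          exact hkn (PNat.coe_injective (by exact_mod_cast sub_eq_zero.mp h))
        rw [if_neg this, if_neg hkn]; simp
    rw [Finset.sum_congr rfl hterm, Finset.sum_ite_eq' s n m]
  · intro k _
    exact ((continuous_const.mul (Efun_cont _)).add (continuous_const.mul (Efun_cont _))).intervalIntegrable _ _

/-- energy computation -/
lemma energyInt (s : Finset ℕ+) (m : ℕ+ → ℂ) :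
    (∫ t in (0:ℝ)..2, (∑ k ∈ s, (m k * Efun (k : ℤ) t).re) ^ 2)
      = ∑ k ∈ s, Complex.normSq (m k) := by
  have key : ∀ t : ℝ,
      (∑ k ∈ s, (m k * Efun (k : ℤ) t).re) ^ 2
        = ∑ k ∈ s, ∑ j ∈ s,
            ((m k * m j * Efun ((k:ℤ) + j) t).re
              + (m k * (starRingEnd ℂ) (m j) * Efun ((k:ℤ) - j) t).re) / 2 := by
    intro t
    rw [sq, Finset.sum_mul_sum]
    refine Finset.sum_congr rfl fun k _ => Finset.sum_congr rfl fun j _ => ?_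
    rw [re_mul_re, map_mul, Efun_conj]
    congr 2
    · rw [show m k * Efun (k:ℤ) t * (m j * Efun (j:ℤ) t)
          = m k * m j * (Efun (k:ℤ) t * Efun (j:ℤ) t) by ring, Efun_mul]
    · rw [show m k * Efun (k:ℤ) t * ((starRingEnd ℂ) (m j) * Efun (-(j:ℤ)) t)
          = m k * (starRingEnd ℂ) (m j) * (Efun (k:ℤ) t * Efun (-(j:ℤ)) t) by ring, Efun_mul,
        sub_eq_add_neg]
  rw [intervalIntegral.integral_congr (fun t _ => key t)]
  have cont1 : ∀ (w : ℂ) (p : ℤ), Continuous fun t : ℝ => (w * Efun p t).re :=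
    fun w p => Complex.continuous_re.comp (continuous_const.mul (Efun_cont p))
  rw [intervalIntegral.integral_finset_sum (fun k _ => by
    apply Continuous.intervalIntegrable
    exact continuous_finset_sum _ (fun j _ => (((cont1 _ _).add (cont1 _ _)).div_const 2)))]
  refine Finset.sum_congr rfl fun k hk => ?_
  rw [intervalIntegral.integral_finset_sum (fun j _ => by
    exact (((cont1 _ _).add (cont1 _ _)).div_const 2).intervalIntegrable _ _)]
  have hterm : ∀ j ∈ s,
      (∫ t in (0:ℝ)..2,
          ((m k * m j * Efun ((k:ℤ) + j) t).re
            + (m k * (starRingEnd ℂ) (m j) * Efun ((k:ℤ) - j) t).re) / 2)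
        = if k = j then Complex.normSq (m k) else 0 := by
    intro j _
    rw [intervalIntegral.integral_div,
      intervalIntegral.integral_add ((cont1 _ _).intervalIntegrable _ _)
        ((cont1 _ _).intervalIntegrable _ _),
      intervalIntegral_re (hf := Continuous.intervalIntegrable (u := fun t => _ * Efun _ t) (continuous_const.mul (Efun_cont _)) _ _),
      intervalIntegral_re (hf := Continuous.intervalIntegrable (u := fun t => _ * Efun _ t) (continuous_const.mul (Efun_cont _)) _ _),
      intervalIntegral.integral_const_mul, intervalIntegral.integral_const_mul,
      Efun_int, Efun_int]
    have h2 : ¬ ((k : ℤ) + j = 0) := by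
      have hk : (0:ℤ) < (k:ℤ) := by exact_mod_cast k.pos
      have hj : (0:ℤ) < (j:ℤ) := by exact_mod_cast j.pos
      omega
    rw [if_neg h2]
    by_cases hkj : k = j
    · subst hkj
      rw [if_pos rfl]
      simp [Complex.mul_conj]
    · have : ¬ ((k:ℤ) - j = 0) := by
        intro h
        exact hkj (PNat.coe_injective (by exact_mod_cast sub_eq_zero.mp h))
      rw [if_neg this, if_neg hkj]; simp
  rw [Finset.sum_congr rfl hterm, Finset.sum_ite_eq s k (fun _ => Complex.normSq (m k)),
    if_pos hk]

lemma Efun_abs (j : ℤ) (t : ℝ) : ‖Efun j t‖ = 1 := by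
  have : Complex.I * (j:ℂ) * (Real.pi:ℂ) * (t:ℝ) = (((j:ℝ) * Real.pi * t : ℝ) : ℂ) * Complex.I := by
    push_cast; ring
  rw [Efun, this, Complex.norm_exp_ofReal_mul_I]

lemma integral_indicator_interval {E : Type*} [NormedAddCommGroup E] [NormedSpace ℝ E]
    {T : ℝ} (hT : 2 ≤ T) (g : ℝ → E) :
    (∫ t in (0:ℝ)..T, (Set.Ioc (0:ℝ) 2).indicator g t) = ∫ t in (0:ℝ)..2, g t := by
  rw [intervalIntegral.integral_of_le (by linarith : (0:ℝ) ≤ T),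
      intervalIntegral.integral_of_le (by norm_num : (0:ℝ) ≤ 2),
      MeasureTheory.integral_indicator measurableSet_Ioc,
      Measure.restrict_restrict measurableSet_Ioc,
      Set.inter_eq_self_of_subset_left (Set.Ioc_subset_Ioc_right hT)]

/-- weak controllability of the string by a point control at
`ξ`, in moment form. -/
theorem string_weak_controllability_moments (ξ : ℝ) (hξ : ξ ∈ Set.Ioo (0 : ℝ) 1)
    (c : ℝ) (hc : 0 < c)
    (hsin : ∀ n : ℕ+, c / (n : ℝ) ≤ |Real.sin ((n : ℝ) * Real.pi * ξ)|)
    (T : ℝ) (hT : 2 < T) :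
    ∃ C > 0, ∀ a b : ℕ+ → ℝ,
      (Function.support a).Finite → (Function.support b).Finite →
      ∃ v : ℝ → ℝ,
        MeasureTheory.MemLp v 2 (MeasureTheory.volume.restrict (Set.Ioc 0 T)) ∧
        (∫ t in (0 : ℝ)..T, v t ^ 2)
          ≤ C * ∑ᶠ n : ℕ+, ((n : ℝ) ^ 4 * a n ^ 2 + (n : ℝ) ^ 2 * b n ^ 2) ∧
        ∀ n : ℕ+,
          2 * (Real.sin ((n : ℝ) * Real.pi * ξ) : ℂ)
              * ∫ t in (0 : ℝ)..T,
                  (v t : ℂ) * Complex.exp (-(Complex.I * (n : ℕ) * (Real.pi : ℂ) * (t : ℂ)))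
            = -((b n : ℂ) + Complex.I * (n : ℕ) * (Real.pi : ℂ) * (a n : ℂ)) := by
  classical
  refine ⟨(1 + Real.pi ^ 2) / (4 * c ^ 2), by positivity, ?_⟩
  intro a b ha hb
  set s : Finset ℕ+ := ha.toFinset ∪ hb.toFinset with hs
  have hsin_ne : ∀ n : ℕ+, Real.sin ((n:ℝ) * Real.pi * ξ) ≠ 0 := by
    intro n h
    have h1 : 0 < c / (n:ℝ) := by positivity
    have := hsin n
    rw [h, abs_zero] at this
    linarith
  set m : ℕ+ → ℂ := fun k =>
    -(((b k : ℂ) + Complex.I * (k : ℕ) * (Real.pi : ℂ) * (a k : ℂ)))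
      / (2 * (Real.sin ((k:ℝ) * Real.pi * ξ) : ℂ)) with hm
  have hab0 : ∀ n : ℕ+, n ∉ s → a n = 0 ∧ b n = 0 := by
    intro n hn
    constructor
    · by_contra h'
      exact hn (Finset.mem_union_left _ (ha.mem_toFinset.2 h'))
    · by_contra h'
      exact hn (Finset.mem_union_right _ (hb.mem_toFinset.2 h'))
  have hm0 : ∀ n : ℕ+, n ∉ s → m n = 0 := by
    intro n hn
    obtain ⟨h1, h2⟩ := hab0 n hn
    simp [hm, h1, h2]
  set f : ℝ → ℝ := fun t => ∑ k ∈ s, (m k * Efun (k : ℤ) t).re with hf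
  have hfc : Continuous f :=
    continuous_finset_sum _ fun k _ => Complex.continuous_re.comp
      (continuous_const.mul (Efun_cont _))
  refine ⟨(Set.Ioc (0:ℝ) 2).indicator f, ?_, ?_, ?_⟩
  · haveI : Fact ((volume (Set.Ioc (0:ℝ) T)) < ⊤) := ⟨measure_Ioc_lt_top⟩
    refine MeasureTheory.MemLp.of_bound
      ((hfc.aestronglyMeasurable).indicator measurableSet_Ioc)
      (∑ k ∈ s, ‖m k‖) ?_
    refine Filter.Eventually.of_forall fun t => ?_
    rw [Real.norm_eq_abs]
    by_cases ht : t ∈ Set.Ioc (0:ℝ) 2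
    · rw [Set.indicator_of_mem ht]
      calc |f t| ≤ ∑ k ∈ s, |(m k * Efun (k:ℤ) t).re| := Finset.abs_sum_le_sum_abs _ _
        _ ≤ ∑ k ∈ s, ‖m k‖ := by
            refine Finset.sum_le_sum fun k _ => ?_
            have h1 : |(m k * Efun (k:ℤ) t).re| ≤ ‖m k * Efun (k:ℤ) t‖ :=
              Complex.abs_re_le_norm _
            rwa [norm_mul, Efun_abs, mul_one] at h1
    · rw [Set.indicator_of_notMem ht, abs_zero]
      positivity
  · have hvsq : Set.EqOn (fun t => ((Set.Ioc (0:ℝ) 2).indicator f t) ^ 2)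
        ((Set.Ioc (0:ℝ) 2).indicator fun t => f t ^ 2) (Set.uIcc (0:ℝ) T) := by
      intro t _
      by_cases ht : t ∈ Set.Ioc (0:ℝ) 2 <;>
        simp [Set.indicator_of_mem, Set.indicator_of_notMem, ht]
    have h1 : (∫ t in (0:ℝ)..T, ((Set.Ioc (0:ℝ) 2).indicator f t) ^ 2)
        = ∑ k ∈ s, Complex.normSq (m k) := by
      rw [intervalIntegral.integral_congr hvsq, integral_indicator_interval hT.le,
        hf]
      exact energyInt s m
    rw [h1]
    have hfin : (∑ᶠ n : ℕ+, ((n : ℝ) ^ 4 * a n ^ 2 + (n : ℝ) ^ 2 * b n ^ 2))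
        = ∑ n ∈ s, ((n : ℝ) ^ 4 * a n ^ 2 + (n : ℝ) ^ 2 * b n ^ 2) := by
      apply finsum_eq_sum_of_support_subset
      intro n hn
      simp only [Function.mem_support] at hn
      by_contra hns
      obtain ⟨h1, h2⟩ := hab0 n hns
      exact hn (by simp [h1, h2])
    rw [hfin, Finset.mul_sum]
    refine Finset.sum_le_sum fun k _ => ?_
    -- per-term bound
    set K : ℝ := (k : ℝ) with hK
    have hK1 : 1 ≤ K := by rw [hK]; exact_mod_cast k.one_le
    set S : ℝ := Real.sin (K * Real.pi * ξ) with hS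
    have hSne : S ≠ 0 := hsin_ne k
    have hnum : ((b k : ℂ) + Complex.I * (k : ℕ) * (Real.pi : ℂ) * (a k : ℂ))
        = ((b k : ℝ) : ℂ) + ((K * Real.pi * a k : ℝ) : ℂ) * Complex.I := by
      push_cast [hK]; ring
    have hNS : Complex.normSq (m k) = (b k ^ 2 + (K * Real.pi * a k) ^ 2) / (4 * S ^ 2) := by
      rw [hm]
      simp only
      rw [Complex.normSq_div, Complex.normSq_neg, hnum, Complex.normSq_add_mul_I]
      have : (2 * ((Real.sin ((k:ℝ) * Real.pi * ξ)) : ℂ)) = (((2 * S : ℝ)) : ℂ) := by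
        push_cast [hS, hK]; ring
      rw [this, Complex.normSq_ofReal]
      ring_nf
    rw [hNS]
    have hS2 : c ^ 2 ≤ S ^ 2 * K ^ 2 := by
      have h1 : c / K ≤ |S| := hsin k
      have h2 : (c / K) ^ 2 ≤ |S| ^ 2 := by
        apply pow_le_pow_left₀ (by positivity) h1
      rw [_root_.sq_abs] at h2
      have hKpos : (0:ℝ) < K := by linarith
      calc c ^ 2 = (c / K) ^ 2 * K ^ 2 := by field_simp
        _ ≤ S ^ 2 * K ^ 2 := mul_le_mul_of_nonneg_right h2 (sq_nonneg K)
    rw [div_le_iff₀ (by positivity : (0:ℝ) < 4 * S ^ 2), div_mul_eq_mul_div,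
      div_mul_eq_mul_div, le_div_iff₀ (by positivity : (0:ℝ) < 4 * c ^ 2)]
    nlinarith [mul_le_mul_of_nonneg_right hS2 (sq_nonneg (b k)),
      mul_le_mul_of_nonneg_right hS2 (mul_nonneg (sq_nonneg (K * Real.pi)) (sq_nonneg (a k))),
      mul_nonneg (sq_nonneg S) (mul_nonneg (sq_nonneg (K ^ 2)) (sq_nonneg (a k))),
      mul_nonneg (sq_nonneg (Real.pi * K)) (mul_nonneg (sq_nonneg S) (sq_nonneg (b k)))]
  · intro n
    have hexp : Set.EqOn
        (fun t : ℝ => (((Set.Ioc (0:ℝ) 2).indicator f t : ℝ) : ℂ)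
          * Complex.exp (-(Complex.I * (n : ℕ) * (Real.pi : ℂ) * (t : ℂ))))
        ((Set.Ioc (0:ℝ) 2).indicator fun t => ((f t : ℝ) : ℂ) * Efun (-(n:ℤ)) t)
        (Set.uIcc (0:ℝ) T) := by
      intro t _
      have he : Complex.exp (-(Complex.I * (n : ℕ) * (Real.pi : ℂ) * (t : ℂ)))
          = Efun (-(n:ℤ)) t := by
        unfold Efun; congr 1; push_cast; ring
      by_cases ht : t ∈ Set.Ioc (0:ℝ) 2 <;>
        simp [Set.indicator_of_mem, Set.indicator_of_notMem, ht, he]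
    have h2 : (∫ t in (0:ℝ)..T, (((Set.Ioc (0:ℝ) 2).indicator f t : ℝ) : ℂ)
          * Complex.exp (-(Complex.I * (n : ℕ) * (Real.pi : ℂ) * (t : ℂ)))) = m n := by
      rw [intervalIntegral.integral_congr hexp, integral_indicator_interval hT.le, hf]
      rw [momentInt s m n]
      by_cases hns : n ∈ s
      · rw [if_pos hns]
      · rw [if_neg hns, hm0 n hns]
    rw [h2, hm]
    simp only
    rw [mul_comm, div_mul_cancel₀]
    exact mul_ne_zero two_ne_zero (Complex.ofReal_ne_zero.2 (hsin_ne n))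
end

section
/- For every T > 0 there exists a constant C > 0 such that for every finitely supported pair of families of complex numbers (α_k)_{k∈(ℕ⁺)²} and (β_k)_{k∈(ℕ⁺)²}, the function φ(x₁,x₂,t) = ∑_{k=(k₁,k₂)} (α_k e^{iω_k t} + β_k e^{−iω_k t}) sin(k₁πx₁) sin(k₂πx₂), with ω_k = π√(k₁²+k₂²), satisfies ∫_0^T ∫_0^1 |∂φ/∂x₁(0,x₂,t)|² dx₂ dt ≤ C ∑_{k∈(ℕ⁺)²} (k₁² + k₂²)(|α_k|² + |β_k|²). -/
/-- The frequency `ω_k = π√(k₁² + k₂²)`. -/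
noncomputable def waveFreq (k : ℕ+ × ℕ+) : ℝ :=
  Real.pi * Real.sqrt ((k.1 : ℝ) ^ 2 + (k.2 : ℝ) ^ 2)

/-- The explicit Fourier-series solution of the wave equation on the unit
square with Dirichlet boundary conditions. -/
noncomputable def waveSol (α β : ℕ+ × ℕ+ → ℂ) (x₁ x₂ t : ℝ) : ℂ :=
  ∑ᶠ k : ℕ+ × ℕ+,
    (α k * Complex.exp (Complex.I * (waveFreq k : ℂ) * (t : ℂ))
      + β k * Complex.exp (-(Complex.I * (waveFreq k : ℂ) * (t : ℂ))))
    * (Real.sin ((k.1 : ℝ) * Real.pi * x₁) : ℂ)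
    * (Real.sin ((k.2 : ℝ) * Real.pi * x₂) : ℂ)

open Real intervalIntegral Complex Finset


lemma int_cos (c : ℝ) (hc : c ≠ 0) : ∫ x in (0:ℝ)..1, Real.cos (c*x) = Real.sin c / c := by
  have h : ∀ x ∈ Set.uIcc (0:ℝ) 1, HasDerivAt (fun y => Real.sin (c*y) / c) (Real.cos (c*x)) x := by
    intro x _
    have : HasDerivAt (fun y : ℝ => c * y) c x := by simpa using (hasDerivAt_id x).const_mul c
    have := (Real.hasDerivAt_sin (c*x)).comp x this
    have h2 := this.div_const c
    simpa [mul_comm, mul_div_assoc, mul_div_cancel_left₀ _ hc] using h2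
  rw [integral_eq_sub_of_hasDerivAt h (by apply Continuous.intervalIntegrable; fun_prop)]
  simp

lemma int_sin (c : ℝ) (hc : c ≠ 0) : ∫ x in (0:ℝ)..1, Real.sin (c*x) = (1 - Real.cos c) / c := by
  have h : ∀ x ∈ Set.uIcc (0:ℝ) 1, HasDerivAt (fun y => -Real.cos (c*y) / c) (Real.sin (c*x)) x := by
    intro x _
    have h1 : HasDerivAt (fun y : ℝ => c * y) c x := by simpa using (hasDerivAt_id x).const_mul c
    have := ((Real.hasDerivAt_cos (c*x)).comp x h1).neg.div_const c
    simpa [mul_comm, mul_div_assoc, mul_div_cancel_left₀ _ hc] using this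
  rw [integral_eq_sub_of_hasDerivAt h (by apply Continuous.intervalIntegrable; fun_prop)]
  field_simp
  rw [mul_zero, Real.cos_zero]; ring

lemma int_xsub1_sin (c : ℝ) (hc : c ≠ 0) :
    ∫ x in (0:ℝ)..1, (x-1) * Real.sin (c*x) = Real.sin c / c^2 - 1/c := by
  have h : ∀ x ∈ Set.uIcc (0:ℝ) 1,
      HasDerivAt (fun y => -((y-1) * Real.cos (c*y)) / c + Real.sin (c*y) / c^2)
        ((x-1) * Real.sin (c*x)) x := by
    intro x _
    have h1 : HasDerivAt (fun y : ℝ => c * y) c x := by simpa using (hasDerivAt_id x).const_mul c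
    have hcos : HasDerivAt (fun y : ℝ => Real.cos (c*y)) (-Real.sin (c*x) * c) x :=
      (Real.hasDerivAt_cos (c*x)).comp x h1
    have hsin : HasDerivAt (fun y : ℝ => Real.sin (c*y)) (Real.cos (c*x) * c) x :=
      (Real.hasDerivAt_sin (c*x)).comp x h1
    have hx : HasDerivAt (fun y : ℝ => y - 1) 1 x := (hasDerivAt_id x).sub_const 1
    have hmul := (hx.mul hcos).neg.div_const c
    have h2 := hsin.div_const (c^2)
    have := hmul.add h2
    refine this.congr_deriv ?_
    field_simp
    ring
  rw [integral_eq_sub_of_hasDerivAt h (by apply Continuous.intervalIntegrable; fun_prop)]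
  simp



lemma int_cos_int (n : ℤ) : ∫ x in (0:ℝ)..1, Real.cos (((n:ℝ)*π)*x) = if n = 0 then 1 else 0 := by
  rcases eq_or_ne n 0 with h | h
  · simp [h]
  · have hc : (n:ℝ)*π ≠ 0 := by
      have := Real.pi_ne_zero
      have : (n:ℝ) ≠ 0 := Int.cast_ne_zero.mpr h
      positivity
    rw [int_cos _ hc, Real.sin_int_mul_pi]
    simp [h]

lemma int_xsub1_sin_int (n : ℤ) :
    ∫ x in (0:ℝ)..1, (x-1) * Real.sin (((n:ℝ)*π)*x) = if n = 0 then 0 else -(1/((n:ℝ)*π)) := by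
  rcases eq_or_ne n 0 with h | h
  · simp [h]
  · have hn : (n:ℝ) ≠ 0 := Int.cast_ne_zero.mpr h
    have hc : (n:ℝ)*π ≠ 0 := mul_ne_zero hn Real.pi_ne_zero
    rw [int_xsub1_sin _ hc, Real.sin_int_mul_pi]
    simp [h]



noncomputable def G (j k : ℕ+) : ℝ :=
  if j = k then -(1/(4*π*(k:ℝ))) else -(1/(2*π))*(1/((j:ℝ)+(k:ℝ)) + 1/((j:ℝ)-(k:ℝ)))

lemma pnat_cast_pos (j : ℕ+) : (0:ℝ) < (j:ℕ) := by exact_mod_cast j.pos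

lemma pnat_cast_ne (j k : ℕ+) (h : j ≠ k) : ((j:ℕ):ℝ) ≠ ((k:ℕ):ℝ) := by
  exact_mod_cast fun hh => h (PNat.coe_injective (by exact_mod_cast hh))

lemma sinsin (j k : ℕ+) :
    ∫ x in (0:ℝ)..1, Real.sin ((j:ℝ)*π*x) * Real.sin ((k:ℝ)*π*x)
      = if j = k then 1/2 else 0 := by
  have he : ∀ x : ℝ, Real.sin ((j:ℝ)*π*x) * Real.sin ((k:ℝ)*π*x)
      = (Real.cos ((((((j:ℤ)-(k:ℤ) : ℤ)):ℝ)*π)*x) - Real.cos ((((((j:ℤ)+(k:ℤ) : ℤ)):ℝ)*π)*x))/2 := by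
    intro x
    rw [show (((((j:ℤ)-(k:ℤ) : ℤ)):ℝ)*π)*x = (j:ℝ)*π*x - (k:ℝ)*π*x by push_cast; ring,
        show (((((j:ℤ)+(k:ℤ) : ℤ)):ℝ)*π)*x = (j:ℝ)*π*x + (k:ℝ)*π*x by push_cast; ring,
        Real.cos_sub, Real.cos_add]
    ring
  simp only [he]
  rw [intervalIntegral.integral_div, intervalIntegral.integral_sub
      (by apply Continuous.intervalIntegrable; fun_prop)
      (by apply Continuous.intervalIntegrable; fun_prop),
    int_cos_int, int_cos_int]
  have h2 : (j:ℤ)+(k:ℤ) ≠ 0 := by positivity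
  rcases eq_or_ne j k with h | h
  · simp [h, h2]
  · have h1 : (j:ℤ)-(k:ℤ) ≠ 0 := sub_ne_zero.mpr (by exact_mod_cast fun hh => h (PNat.coe_injective (by exact_mod_cast hh)))
    simp [h, h1, h2]

lemma coscos (j k : ℕ+) :
    ∫ x in (0:ℝ)..1, Real.cos ((j:ℝ)*π*x) * Real.cos ((k:ℝ)*π*x)
      = if j = k then 1/2 else 0 := by
  have he : ∀ x : ℝ, Real.cos ((j:ℝ)*π*x) * Real.cos ((k:ℝ)*π*x)
      = (Real.cos ((((((j:ℤ)-(k:ℤ) : ℤ)):ℝ)*π)*x) + Real.cos ((((((j:ℤ)+(k:ℤ) : ℤ)):ℝ)*π)*x))/2 := by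
    intro x
    rw [show (((((j:ℤ)-(k:ℤ) : ℤ)):ℝ)*π)*x = (j:ℝ)*π*x - (k:ℝ)*π*x by push_cast; ring,
        show (((((j:ℤ)+(k:ℤ) : ℤ)):ℝ)*π)*x = (j:ℝ)*π*x + (k:ℝ)*π*x by push_cast; ring,
        Real.cos_sub, Real.cos_add]
    ring
  simp only [he]
  rw [intervalIntegral.integral_div, intervalIntegral.integral_add
      (by apply Continuous.intervalIntegrable; fun_prop)
      (by apply Continuous.intervalIntegrable; fun_prop),
    int_cos_int, int_cos_int]
  have h2 : (j:ℤ)+(k:ℤ) ≠ 0 := by positivity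
  rcases eq_or_ne j k with h | h
  · simp [h, h2]
  · have h1 : (j:ℤ)-(k:ℤ) ≠ 0 := sub_ne_zero.mpr (by exact_mod_cast fun hh => h (PNat.coe_injective (by exact_mod_cast hh)))
    simp [h, h1, h2]

lemma int_G (j k : ℕ+) :
    ∫ x in (0:ℝ)..1, (x-1) * (Real.sin ((j:ℝ)*π*x) * Real.cos ((k:ℝ)*π*x)) = G j k := by
  have he : ∀ x : ℝ, (x-1) * (Real.sin ((j:ℝ)*π*x) * Real.cos ((k:ℝ)*π*x))
      = ((x-1) * Real.sin ((((((j:ℤ)+(k:ℤ) : ℤ)):ℝ)*π)*x) + (x-1) * Real.sin ((((((j:ℤ)-(k:ℤ) : ℤ)):ℝ)*π)*x))/2 := by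
    intro x
    rw [show (((((j:ℤ)-(k:ℤ) : ℤ)):ℝ)*π)*x = (j:ℝ)*π*x - (k:ℝ)*π*x by push_cast; ring,
        show (((((j:ℤ)+(k:ℤ) : ℤ)):ℝ)*π)*x = (j:ℝ)*π*x + (k:ℝ)*π*x by push_cast; ring,
        Real.sin_sub, Real.sin_add]
    ring
  simp only [he]
  rw [intervalIntegral.integral_div, intervalIntegral.integral_add
      (by apply Continuous.intervalIntegrable; fun_prop)
      (by apply Continuous.intervalIntegrable; fun_prop),
    int_xsub1_sin_int, int_xsub1_sin_int]
  have h2 : (j:ℤ)+(k:ℤ) ≠ 0 := by positivity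
  rcases eq_or_ne j k with h | h
  · subst h
    simp only [h2, if_neg, sub_self, Int.cast_add]
    have hj := pnat_cast_pos j
    rw [G]; simp only [if_pos rfl]
    have hπ := Real.pi_pos
    push_cast
    field_simp
    ring
  · have h1 : (j:ℤ)-(k:ℤ) ≠ 0 := sub_ne_zero.mpr (by exact_mod_cast fun hh => h (PNat.coe_injective (by exact_mod_cast hh)))
    have hjk := pnat_cast_ne j k h
    have hj := pnat_cast_pos j
    have hk := pnat_cast_pos k
    have hπ := Real.pi_pos
    have hsub : (j:ℝ)-(k:ℝ) ≠ 0 := sub_ne_zero.mpr hjk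
    have hadd : (j:ℝ)+(k:ℝ) ≠ 0 := by positivity
    rw [G]; simp only [if_neg h, if_neg h1, if_neg h2]
    push_cast
    rw [show ((j:ℝ)+(k:ℝ))*π = π*((j:ℝ)+(k:ℝ)) by ring,
        show ((j:ℝ)-(k:ℝ))*π = π*((j:ℝ)-(k:ℝ)) by ring]
    field_simp
    ring



lemma re_mul_conj (z : ℂ) : (z * (starRingEnd ℂ) z).re = ‖z‖^2 := by
  rw [Complex.mul_conj, Complex.ofReal_re, Complex.normSq_eq_norm_sq]

variable {ι : Type*} [DecidableEq ι]

lemma L2sin (S : Finset ι) (w : ι → ℂ) (κ : ι → ℕ+) :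
    ∫ x in (0:ℝ)..1, ‖∑ k ∈ S, w k * (Real.sin ((κ k :ℝ)*π*x) : ℂ)‖^2
      = ∑ j ∈ S, ∑ k ∈ S, (if κ j = κ k then (1/2:ℝ) else 0) * (w j * (starRingEnd ℂ) (w k)).re := by
  have hpt : ∀ x : ℝ, ‖∑ k ∈ S, w k * (Real.sin ((κ k :ℝ)*π*x) : ℂ)‖^2
      = ∑ j ∈ S, ∑ k ∈ S,
          (Real.sin ((κ j :ℝ)*π*x) * Real.sin ((κ k :ℝ)*π*x)) * (w j * (starRingEnd ℂ) (w k)).re := by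
    intro x
    rw [← re_mul_conj, map_sum, Finset.sum_mul_sum, Complex.re_sum]
    refine Finset.sum_congr rfl fun j _ => ?_
    rw [Complex.re_sum]
    refine Finset.sum_congr rfl fun k _ => ?_
    rw [show (w j * (Real.sin ((κ j :ℝ)*π*x) : ℂ)) * (starRingEnd ℂ) (w k * (Real.sin ((κ k :ℝ)*π*x) : ℂ))
        = ((Real.sin ((κ j :ℝ)*π*x) * Real.sin ((κ k :ℝ)*π*x) : ℝ) : ℂ) * (w j * (starRingEnd ℂ) (w k)) by
      rw [map_mul, Complex.conj_ofReal]; push_cast; ring]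
    rw [Complex.re_ofReal_mul]
  simp only [hpt]
  rw [intervalIntegral.integral_finset_sum (fun j _ => by
    apply Continuous.intervalIntegrable; fun_prop)]
  refine Finset.sum_congr rfl fun j _ => ?_
  rw [intervalIntegral.integral_finset_sum (fun k _ => by
    apply Continuous.intervalIntegrable; fun_prop)]
  refine Finset.sum_congr rfl fun k _ => ?_
  rw [intervalIntegral.integral_mul_const, sinsin]

lemma L2sin_diag (S : Finset ℕ+) (w : ℕ+ → ℂ) :
    ∫ x in (0:ℝ)..1, ‖∑ k ∈ S, w k * (Real.sin ((k:ℝ)*π*x) : ℂ)‖^2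
      = (1/2) * ∑ k ∈ S, ‖w k‖^2 := by
  have h := L2sin S w id
  simp only [id_eq] at h
  rw [h, Finset.mul_sum]
  refine Finset.sum_congr rfl fun j hj => ?_
  rw [Finset.sum_eq_single j (fun k _ hk => by rw [if_neg (Ne.symm hk), zero_mul]) (fun h => absurd hj h),
    if_pos rfl, re_mul_conj]

lemma L2cos (S : Finset ℕ+) (w : ℕ+ → ℂ) :
    ∫ x in (0:ℝ)..1, ‖∑ k ∈ S, w k * (Real.cos ((k:ℝ)*π*x) : ℂ)‖^2
      = (1/2) * ∑ k ∈ S, ‖w k‖^2 := by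
  have hpt : ∀ x : ℝ, ‖∑ k ∈ S, w k * (Real.cos ((k:ℝ)*π*x) : ℂ)‖^2
      = ∑ j ∈ S, ∑ k ∈ S,
          (Real.cos ((j:ℝ)*π*x) * Real.cos ((k:ℝ)*π*x)) * (w j * (starRingEnd ℂ) (w k)).re := by
    intro x
    rw [← re_mul_conj, map_sum, Finset.sum_mul_sum, Complex.re_sum]
    refine Finset.sum_congr rfl fun j _ => ?_
    rw [Complex.re_sum]
    refine Finset.sum_congr rfl fun k _ => ?_
    rw [show (w j * (Real.cos ((j:ℝ)*π*x) : ℂ)) * (starRingEnd ℂ) (w k * (Real.cos ((k:ℝ)*π*x) : ℂ))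
        = ((Real.cos ((j:ℝ)*π*x) * Real.cos ((k:ℝ)*π*x) : ℝ) : ℂ) * (w j * (starRingEnd ℂ) (w k)) by
      rw [map_mul, Complex.conj_ofReal]; push_cast; ring]
    rw [Complex.re_ofReal_mul]
  simp only [hpt]
  rw [intervalIntegral.integral_finset_sum (fun j _ => by
    apply Continuous.intervalIntegrable; fun_prop)]
  rw [Finset.mul_sum]
  refine Finset.sum_congr rfl fun j hj => ?_
  rw [intervalIntegral.integral_finset_sum (fun k _ => by
    apply Continuous.intervalIntegrable; fun_prop)]
  rw [Finset.sum_eq_single j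
    (fun k _ hk => by rw [intervalIntegral.integral_mul_const, coscos, if_neg (Ne.symm hk)]; ring)
    (fun h => absurd hj h)]
  rw [intervalIntegral.integral_mul_const, coscos, if_pos rfl, re_mul_conj]

lemma Xrep (S : Finset ℕ+) (v u : ℕ+ → ℂ) :
    ∫ x in (0:ℝ)..1, (x-1) *
        ((∑ j ∈ S, v j * (Real.sin ((j:ℝ)*π*x) : ℂ))
          * (starRingEnd ℂ) (∑ k ∈ S, u k * (((k:ℝ)*π) * Real.cos ((k:ℝ)*π*x) : ℝ))).re
      = ∑ j ∈ S, ∑ k ∈ S, G j k * ((k:ℝ)*π) * (v j * (starRingEnd ℂ) (u k)).re := by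
  have hpt : ∀ x : ℝ, (x-1) *
        ((∑ j ∈ S, v j * (Real.sin ((j:ℝ)*π*x) : ℂ))
          * (starRingEnd ℂ) (∑ k ∈ S, u k * (((k:ℝ)*π) * Real.cos ((k:ℝ)*π*x) : ℝ))).re
      = ∑ j ∈ S, ∑ k ∈ S,
          ((x-1) * (Real.sin ((j:ℝ)*π*x) * Real.cos ((k:ℝ)*π*x))) * (((k:ℝ)*π) * (v j * (starRingEnd ℂ) (u k)).re) := by
    intro x
    rw [map_sum, Finset.sum_mul_sum, Complex.re_sum, Finset.mul_sum]
    refine Finset.sum_congr rfl fun j _ => ?_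
    rw [Complex.re_sum, Finset.mul_sum]
    refine Finset.sum_congr rfl fun k _ => ?_
    rw [show (v j * (Real.sin ((j:ℝ)*π*x) : ℂ)) * (starRingEnd ℂ) (u k * (((k:ℝ)*π) * Real.cos ((k:ℝ)*π*x) : ℝ))
        = ((Real.sin ((j:ℝ)*π*x) * (((k:ℝ)*π) * Real.cos ((k:ℝ)*π*x)) : ℝ) : ℂ) * (v j * (starRingEnd ℂ) (u k)) by
      rw [map_mul, Complex.conj_ofReal]; push_cast; ring]
    rw [Complex.re_ofReal_mul]
    ring
  simp only [hpt]
  rw [intervalIntegral.integral_finset_sum (fun j _ => by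
    apply Continuous.intervalIntegrable; fun_prop)]
  refine Finset.sum_congr rfl fun j _ => ?_
  rw [intervalIntegral.integral_finset_sum (fun k _ => by
    apply Continuous.intervalIntegrable; fun_prop)]
  refine Finset.sum_congr rfl fun k _ => ?_
  rw [intervalIntegral.integral_mul_const, int_G]
  ring



lemma X_le (S : Finset ℕ+) (v u : ℕ+ → ℂ) :
    |∑ j ∈ S, ∑ k ∈ S, G j k * ((k:ℝ)*π) * (v j * (starRingEnd ℂ) (u k)).re|
      ≤ (1/4) * (∑ k ∈ S, ‖v k‖^2 + ∑ k ∈ S, ((k:ℝ)*π)^2 * ‖u k‖^2) := by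
  rw [← Xrep S v u]
  set f : ℝ → ℂ := fun x => ∑ j ∈ S, v j * (Real.sin ((j:ℝ)*π*x) : ℂ) with hf
  set g : ℝ → ℂ := fun x => ∑ k ∈ S, u k * (((k:ℝ)*π) * Real.cos ((k:ℝ)*π*x) : ℝ) with hg
  have hfc : Continuous f := continuous_finset_sum _ (fun j _ => by fun_prop)
  have hgc : Continuous g := continuous_finset_sum _ (fun j _ => by fun_prop)
  have key : ∀ x ∈ Set.Icc (0:ℝ) 1, |(x-1) * ((f x) * (starRingEnd ℂ) (g x)).re|
      ≤ (1/2) * (‖f x‖^2 + ‖g x‖^2) := by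
    intro x hx
    have h1 : |x-1| ≤ 1 := by rw [abs_le]; constructor <;> [linarith [hx.1]; linarith [hx.2]]
    have h2 : |((f x) * (starRingEnd ℂ) (g x)).re| ≤ ‖f x‖ * ‖g x‖ := by
      calc |((f x) * (starRingEnd ℂ) (g x)).re| ≤ ‖(f x) * (starRingEnd ℂ) (g x)‖ := by
            exact Complex.abs_re_le_norm _
        _ = ‖f x‖ * ‖g x‖ := by rw [norm_mul, RCLike.norm_conj]
    have h3 : ‖f x‖ * ‖g x‖ ≤ (1/2) * (‖f x‖^2 + ‖g x‖^2) := by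
      nlinarith [sq_nonneg (‖f x‖ - ‖g x‖)]
    calc |(x-1) * ((f x) * (starRingEnd ℂ) (g x)).re|
        = |x-1| * |((f x) * (starRingEnd ℂ) (g x)).re| := abs_mul _ _
      _ ≤ 1 * (‖f x‖ * ‖g x‖) := by
          apply mul_le_mul h1 h2 (abs_nonneg _) zero_le_one
      _ ≤ (1/2) * (‖f x‖^2 + ‖g x‖^2) := by rw [one_mul]; exact h3
  have hInt1 : IntervalIntegrable (fun x => (x-1) * ((f x) * (starRingEnd ℂ) (g x)).re)
      MeasureTheory.volume 0 1 := by
    apply Continuous.intervalIntegrable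
    fun_prop
  have hInt2 : IntervalIntegrable (fun x => (1/2) * (‖f x‖^2 + ‖g x‖^2))
      MeasureTheory.volume 0 1 := by
    apply Continuous.intervalIntegrable
    fun_prop
  have hb1 : (∫ x in (0:ℝ)..1, (x-1) * ((f x) * (starRingEnd ℂ) (g x)).re)
      ≤ ∫ x in (0:ℝ)..1, (1/2) * (‖f x‖^2 + ‖g x‖^2) :=
    intervalIntegral.integral_mono_on (by norm_num) hInt1 hInt2
      (fun x hx => le_of_abs_le (key x hx))
  have hb2 : -(∫ x in (0:ℝ)..1, (1/2) * (‖f x‖^2 + ‖g x‖^2))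
      ≤ ∫ x in (0:ℝ)..1, (x-1) * ((f x) * (starRingEnd ℂ) (g x)).re := by
    rw [← intervalIntegral.integral_neg]
    exact intervalIntegral.integral_mono_on (by norm_num) hInt2.neg hInt1
      (fun x hx => neg_le_of_abs_le (key x hx))
  have habs : |∫ x in (0:ℝ)..1, (x-1) * ((f x) * (starRingEnd ℂ) (g x)).re|
      ≤ ∫ x in (0:ℝ)..1, (1/2) * (‖f x‖^2 + ‖g x‖^2) := abs_le.mpr ⟨hb2, hb1⟩
  refine le_trans habs ?_
  rw [intervalIntegral.integral_const_mul, intervalIntegral.integral_add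
      (by apply Continuous.intervalIntegrable; fun_prop)
      (by apply Continuous.intervalIntegrable; fun_prop)]
  have e1 : (∫ x in (0:ℝ)..1, ‖f x‖^2) = (1/2) * ∑ k ∈ S, ‖v k‖^2 := L2sin_diag S v
  have hg2 : g = fun x => ∑ k ∈ S, (u k * (((k:ℝ)*π : ℝ):ℂ)) * (Real.cos ((k:ℝ)*π*x):ℂ) := by
    funext x
    refine Finset.sum_congr rfl fun k _ => ?_
    push_cast
    ring
  have e2 : (∫ x in (0:ℝ)..1, ‖g x‖^2) = (1/2) * ∑ k ∈ S, ((k:ℝ)*π)^2 * ‖u k‖^2 := by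
    rw [hg2, L2cos]
    congr 1
    refine Finset.sum_congr rfl fun k _ => ?_
    rw [norm_mul, mul_pow, Complex.norm_real, Real.norm_eq_abs]
    rw [_root_.sq_abs]
    ring
  rw [e1, e2]
  apply le_of_eq
  ring


-- symmetrization
lemma sym_sum {ι : Type*} (S : Finset ι) (M N : ι → ι → ℝ) (r : ι → ι → ℝ)
    (hr : ∀ j k, r j k = r k j)
    (h : ∀ j ∈ S, ∀ k ∈ S, M j k + M k j = N j k + N k j) :
    ∑ j ∈ S, ∑ k ∈ S, M j k * r j k = ∑ j ∈ S, ∑ k ∈ S, N j k * r j k := by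
  have key : ∀ P : ι → ι → ℝ, ∑ j ∈ S, ∑ k ∈ S, (P j k + P k j) * r j k
      = 2 * (∑ j ∈ S, ∑ k ∈ S, P j k * r j k) := by
    intro P
    have h2 : ∑ j ∈ S, ∑ k ∈ S, P k j * r j k = ∑ j ∈ S, ∑ k ∈ S, P j k * r j k := by
      rw [Finset.sum_comm]
      exact Finset.sum_congr rfl fun j _ => Finset.sum_congr rfl fun k _ => by rw [hr]
    calc ∑ j ∈ S, ∑ k ∈ S, (P j k + P k j) * r j k
        = ∑ j ∈ S, ∑ k ∈ S, (P j k * r j k + P k j * r j k) := by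
          exact Finset.sum_congr rfl fun j _ => Finset.sum_congr rfl fun k _ => by ring
      _ = (∑ j ∈ S, ∑ k ∈ S, P j k * r j k) + ∑ j ∈ S, ∑ k ∈ S, P k j * r j k := by
          rw [← Finset.sum_add_distrib]
          exact Finset.sum_congr rfl fun j _ => by rw [← Finset.sum_add_distrib]
      _ = 2 * (∑ j ∈ S, ∑ k ∈ S, P j k * r j k) := by rw [h2]; ring
  have hMN : ∑ j ∈ S, ∑ k ∈ S, (M j k + M k j) * r j k
      = ∑ j ∈ S, ∑ k ∈ S, (N j k + N k j) * r j k :=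
    Finset.sum_congr rfl fun j hj => Finset.sum_congr rfl fun k hk => by rw [h j hj k hk]
  have := (key M).symm.trans (hMN.trans (key N))
  linarith

lemma re_mul_conj_comm (z w : ℂ) : (z * (starRingEnd ℂ) w).re = (w * (starRingEnd ℂ) z).re := by
  simp [Complex.mul_re]
  ring

-- exp derivative helper
lemma hasDerivAt_cexp_lin (ω : ℝ) (t : ℝ) :
    HasDerivAt (fun s : ℝ => Complex.exp (Complex.I*(ω:ℂ)*(s:ℂ)))
      (Complex.I*(ω:ℂ) * Complex.exp (Complex.I*(ω:ℂ)*(t:ℂ))) t := by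
  have h1 : HasDerivAt (fun s : ℝ => ((s:ℝ):ℂ)) 1 t := (hasDerivAt_id t).ofReal_comp
  have h2 : HasDerivAt (fun s : ℝ => Complex.I*(ω:ℂ)*(s:ℂ)) (Complex.I*(ω:ℂ)) t := by
    simpa using h1.const_mul (Complex.I*(ω:ℂ))
  have := h2.cexp
  simpa [mul_comm] using this

lemma hasDerivAt_cexp_lin_neg (ω : ℝ) (t : ℝ) :
    HasDerivAt (fun s : ℝ => Complex.exp (-(Complex.I*(ω:ℂ)*(s:ℂ))))
      (-(Complex.I*(ω:ℂ)) * Complex.exp (-(Complex.I*(ω:ℂ)*(t:ℂ)))) t := by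
  have h1 : HasDerivAt (fun s : ℝ => ((s:ℝ):ℂ)) 1 t := (hasDerivAt_id t).ofReal_comp
  have h2 : HasDerivAt (fun s : ℝ => -(Complex.I*(ω:ℂ)*(s:ℂ))) (-(Complex.I*(ω:ℂ))) t := by
    simpa using (h1.const_mul (Complex.I*(ω:ℂ))).fun_neg
  have := h2.cexp
  simpa [mul_comm] using this

lemma conj_cexp (ω : ℝ) (t : ℝ) :
    (starRingEnd ℂ) (Complex.exp (Complex.I*(ω:ℂ)*(t:ℂ))) = Complex.exp (-(Complex.I*(ω:ℂ)*(t:ℂ))) := by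
  rw [← Complex.exp_conj]
  congr 1
  simp [map_mul, Complex.conj_I, Complex.conj_ofReal]

lemma conj_cexp_neg (ω : ℝ) (t : ℝ) :
    (starRingEnd ℂ) (Complex.exp (-(Complex.I*(ω:ℂ)*(t:ℂ)))) = Complex.exp (Complex.I*(ω:ℂ)*(t:ℂ)) := by
  rw [← Complex.exp_conj]
  congr 1
  simp [map_mul, Complex.conj_I, Complex.conj_ofReal]

lemma norm_cexp_lin (ω : ℝ) (t : ℝ) : ‖Complex.exp (Complex.I*(ω:ℂ)*(t:ℂ))‖ = 1 := by
  rw [Complex.norm_exp]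
  have : (Complex.I*(ω:ℂ)*(t:ℂ)).re = 0 := by simp
  rw [this, Real.exp_zero]

lemma norm_cexp_lin_neg (ω : ℝ) (t : ℝ) : ‖Complex.exp (-(Complex.I*(ω:ℂ)*(t:ℂ)))‖ = 1 := by
  rw [Complex.norm_exp]
  have : (-(Complex.I*(ω:ℂ)*(t:ℂ))).re = 0 := by simp
  rw [this, Real.exp_zero]



noncomputable def lam (m k : ℕ+) : ℝ := π * Real.sqrt ((k:ℝ)^2 + (m:ℝ)^2)

lemma lam_sq (m k : ℕ+) : (lam m k)^2 = π^2*((k:ℝ)^2+(m:ℝ)^2) := by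
  rw [lam, mul_pow, Real.sq_sqrt (by positivity)]

lemma lam_nonneg (m k : ℕ+) : 0 ≤ lam m k := by rw [lam]; positivity

noncomputable def cf (a b : ℕ+ → ℂ) (m k : ℕ+) (t : ℝ) : ℂ :=
  a k * Complex.exp (Complex.I*(lam m k :ℂ)*(t:ℂ)) + b k * Complex.exp (-(Complex.I*(lam m k:ℂ)*(t:ℂ)))

noncomputable def cfd (a b : ℕ+ → ℂ) (m k : ℕ+) (t : ℝ) : ℂ :=
  (Complex.I*(lam m k:ℂ)) * (a k * Complex.exp (Complex.I*(lam m k:ℂ)*(t:ℂ)))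
  - (Complex.I*(lam m k:ℂ)) * (b k * Complex.exp (-(Complex.I*(lam m k:ℂ)*(t:ℂ))))

variable (a b : ℕ+ → ℂ) (m : ℕ+)

lemma hasDerivAt_cf (k : ℕ+) (t : ℝ) : HasDerivAt (fun s => cf a b m k s) (cfd a b m k t) t := by
  unfold cf cfd
  have h := ((hasDerivAt_cexp_lin (lam m k) t).const_mul (a k)).add
    ((hasDerivAt_cexp_lin_neg (lam m k) t).const_mul (b k))
  refine h.congr_deriv ?_
  ring

lemma hasDerivAt_cfd (k : ℕ+) (t : ℝ) :
    HasDerivAt (fun s => cfd a b m k s) (((-(lam m k)^2 : ℝ) : ℂ) * cf a b m k t) t := by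
  unfold cf cfd
  have h := (((hasDerivAt_cexp_lin (lam m k) t).const_mul (a k)).const_mul (Complex.I*(lam m k:ℂ))).sub
    (((hasDerivAt_cexp_lin_neg (lam m k) t).const_mul (b k)).const_mul (Complex.I*(lam m k:ℂ)))
  refine h.congr_deriv ?_
  symm
  push_cast
  linear_combination (-(lam m k:ℂ)^2 * (a k * Complex.exp (Complex.I*(lam m k:ℂ)*(t:ℂ)))
    - (lam m k:ℂ)^2 * (b k * Complex.exp (-(Complex.I*(lam m k:ℂ)*(t:ℂ))))) * Complex.I_sq
    
lemma conj_cf (k : ℕ+) (t : ℝ) :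
    (starRingEnd ℂ) (cf a b m k t)
      = (starRingEnd ℂ) (a k) * Complex.exp (-(Complex.I*(lam m k:ℂ)*(t:ℂ)))
        + (starRingEnd ℂ) (b k) * Complex.exp (Complex.I*(lam m k:ℂ)*(t:ℂ)) := by
  unfold cf
  rw [map_add, map_mul, map_mul, conj_cexp, conj_cexp_neg]

lemma hasDerivAt_conj_cf (k : ℕ+) (t : ℝ) :
    HasDerivAt (fun s => (starRingEnd ℂ) (cf a b m k s)) ((starRingEnd ℂ) (cfd a b m k t)) t := by
  have he : (fun s => (starRingEnd ℂ) (cf a b m k s))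
      = fun s : ℝ => (starRingEnd ℂ) (a k) * Complex.exp (-(Complex.I*(lam m k:ℂ)*(s:ℂ)))
        + (starRingEnd ℂ) (b k) * Complex.exp (Complex.I*(lam m k:ℂ)*(s:ℂ)) :=
    funext fun s => conj_cf a b m k s
  rw [he]
  have h := ((hasDerivAt_cexp_lin_neg (lam m k) t).const_mul ((starRingEnd ℂ) (a k))).add
    ((hasDerivAt_cexp_lin (lam m k) t).const_mul ((starRingEnd ℂ) (b k)))
  refine h.congr_deriv ?_
  unfold cfd
  rw [map_sub]
  simp only [map_mul, conj_cexp, conj_cexp_neg, Complex.conj_I, Complex.conj_ofReal]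
  ring

lemma cont_cf (k : ℕ+) : Continuous (fun s => cf a b m k s) := by unfold cf; fun_prop
lemma cont_cfd (k : ℕ+) : Continuous (fun s => cfd a b m k s) := by unfold cfd; fun_prop

lemma norm_cf_le (k : ℕ+) (t : ℝ) : ‖cf a b m k t‖ ≤ ‖a k‖ + ‖b k‖ := by
  unfold cf
  refine le_trans (norm_add_le _ _) ?_
  rw [norm_mul, norm_mul, norm_cexp_lin, norm_cexp_lin_neg, mul_one, mul_one]

lemma norm_cfd_le (k : ℕ+) (t : ℝ) : ‖cfd a b m k t‖ ≤ lam m k * (‖a k‖ + ‖b k‖) := by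
  unfold cfd
  refine le_trans (norm_sub_le _ _) ?_
  have h2 : ‖((lam m k : ℝ):ℂ)‖ = lam m k := by
    rw [Complex.norm_real, Real.norm_eq_abs, _root_.abs_of_nonneg (lam_nonneg m k)]
  simp only [norm_mul, norm_cexp_lin, norm_cexp_lin_neg, Complex.norm_I, mul_one, one_mul, h2]
  ring_nf
  nlinarith [lam_nonneg m k, norm_nonneg (a k), norm_nonneg (b k)]

lemma cond1 (j k : ℕ+) :
    (G j k * ((k:ℝ)*π)) + (G k j * ((j:ℝ)*π))
      = (if j = k then -(1/4:ℝ) else 0) + (if k = j then -(1/4:ℝ) else 0) := by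
  rcases eq_or_ne j k with h|h
  · subst h
    simp only [G, if_pos rfl, ite_true]
    have hk := pnat_cast_pos j
    have hπ := Real.pi_ne_zero
    field_simp
  · simp only [G, if_neg h, if_neg (Ne.symm h)]
    have hjk : ((j:ℕ):ℝ) - ((k:ℕ):ℝ) ≠ 0 := sub_ne_zero.mpr (pnat_cast_ne j k h)
    have hkj : ((k:ℕ):ℝ) - ((j:ℕ):ℝ) ≠ 0 := sub_ne_zero.mpr (pnat_cast_ne k j (Ne.symm h))
    have hj := pnat_cast_pos j
    have hk := pnat_cast_pos k
    have hadd : ((j:ℕ):ℝ) + ((k:ℕ):ℝ) ≠ 0 := by positivity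
    have hadd' : ((k:ℕ):ℝ) + ((j:ℕ):ℝ) ≠ 0 := by positivity
    have hπ := Real.pi_ne_zero
    field_simp
    ring

lemma cond2 (m j k : ℕ+) :
    (G j k * ((k:ℝ)*π) * (-(lam m j)^2)) + (G k j * ((j:ℝ)*π) * (-(lam m k)^2))
      = ((π^2/2)*((j:ℝ)*(k:ℝ)) + (if j = k then -(π^2/4)*((k:ℝ)^2-(m:ℝ)^2) else 0))
        + ((π^2/2)*((k:ℝ)*(j:ℝ)) + (if k = j then -(π^2/4)*((j:ℝ)^2-(m:ℝ)^2) else 0)) := by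
  rcases eq_or_ne j k with h|h
  · subst h
    simp only [G, if_pos rfl, ite_true]
    rw [lam_sq]
    have hk := pnat_cast_pos j
    have hπ := Real.pi_ne_zero
    field_simp
    ring
  · simp only [G, if_neg h, if_neg (Ne.symm h)]
    rw [lam_sq, lam_sq]
    have hjk : ((j:ℕ):ℝ) - ((k:ℕ):ℝ) ≠ 0 := sub_ne_zero.mpr (pnat_cast_ne j k h)
    have hkj : ((k:ℕ):ℝ) - ((j:ℕ):ℝ) ≠ 0 := sub_ne_zero.mpr (pnat_cast_ne k j (Ne.symm h))
    have hj := pnat_cast_pos j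
    have hk := pnat_cast_pos k
    have hadd : ((j:ℕ):ℝ) + ((k:ℕ):ℝ) ≠ 0 := by positivity
    have hadd' : ((k:ℕ):ℝ) + ((j:ℕ):ℝ) ≠ 0 := by positivity
    have hπ := Real.pi_ne_zero
    field_simp
    ring

noncomputable def FF (a b : ℕ+ → ℂ) (m : ℕ+) (S : Finset ℕ+) (t : ℝ) : ℂ :=
  ∑ k ∈ S, (((k:ℝ)*π : ℝ) : ℂ) * cf a b m k t
noncomputable def XX (a b : ℕ+ → ℂ) (m : ℕ+) (S : Finset ℕ+) (t : ℝ) : ℝ :=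
  ∑ j ∈ S, ∑ k ∈ S, G j k * ((k:ℝ)*π) * (cfd a b m j t * (starRingEnd ℂ) (cf a b m k t)).re


variable (a b : ℕ+ → ℂ) (m : ℕ+)

lemma normsq_FF (S : Finset ℕ+) (t : ℝ) :
    ‖FF a b m S t‖^2 = ∑ j ∈ S, ∑ k ∈ S,
      (((j:ℝ)*π)*((k:ℝ)*π)) * (cf a b m j t * (starRingEnd ℂ) (cf a b m k t)).re := by
  rw [← re_mul_conj]
  unfold FF
  rw [map_sum, Finset.sum_mul_sum, Complex.re_sum]
  refine Finset.sum_congr rfl fun j _ => ?_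
  rw [Complex.re_sum]
  refine Finset.sum_congr rfl fun k _ => ?_
  rw [show ((((j:ℝ)*π : ℝ):ℂ) * cf a b m j t) * (starRingEnd ℂ) ((((k:ℝ)*π : ℝ):ℂ) * cf a b m k t)
      = ((((j:ℝ)*π)*((k:ℝ)*π) : ℝ) : ℂ) * (cf a b m j t * (starRingEnd ℂ) (cf a b m k t)) by
    rw [map_mul, Complex.conj_ofReal]; push_cast; ring]
  rw [Complex.re_ofReal_mul]

lemma deriv_value (S : Finset ℕ+) (t : ℝ) :
    ∑ j ∈ S, ∑ k ∈ S, G j k * ((k:ℝ)*π) *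
        ((((-(lam m j)^2 : ℝ):ℂ) * cf a b m j t) * (starRingEnd ℂ) (cf a b m k t)
          + cfd a b m j t * (starRingEnd ℂ) (cfd a b m k t)).re
      = (1/2)*‖FF a b m S t‖^2
        - ((π^2/4) * ∑ k ∈ S, ((k:ℝ)^2-(m:ℝ)^2)*‖cf a b m k t‖^2
            + (1/4) * ∑ k ∈ S, ‖cfd a b m k t‖^2) := by
  have hsplit : ∑ j ∈ S, ∑ k ∈ S, G j k * ((k:ℝ)*π) *
        ((((-(lam m j)^2 : ℝ):ℂ) * cf a b m j t) * (starRingEnd ℂ) (cf a b m k t)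
          + cfd a b m j t * (starRingEnd ℂ) (cfd a b m k t)).re
      = (∑ j ∈ S, ∑ k ∈ S, (G j k * ((k:ℝ)*π) * (-(lam m j)^2))
            * (cf a b m j t * (starRingEnd ℂ) (cf a b m k t)).re)
        + ∑ j ∈ S, ∑ k ∈ S, (G j k * ((k:ℝ)*π))
            * (cfd a b m j t * (starRingEnd ℂ) (cfd a b m k t)).re := by
    rw [← Finset.sum_add_distrib]
    refine Finset.sum_congr rfl fun j _ => ?_
    rw [← Finset.sum_add_distrib]
    refine Finset.sum_congr rfl fun k _ => ?_
    rw [Complex.add_re, mul_assoc ((((-(lam m j)^2 : ℝ)):ℂ)), Complex.re_ofReal_mul]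
    ring
  rw [hsplit]
  -- second piece
  have hB : ∑ j ∈ S, ∑ k ∈ S, (G j k * ((k:ℝ)*π))
        * (cfd a b m j t * (starRingEnd ℂ) (cfd a b m k t)).re
      = -((1/4) * ∑ k ∈ S, ‖cfd a b m k t‖^2) := by
    rw [sym_sum S _ (fun j k => if j = k then -(1/4:ℝ) else 0) _
      (fun j k => re_mul_conj_comm _ _) (fun j _ k _ => cond1 j k)]
    rw [Finset.mul_sum, ← Finset.sum_neg_distrib]
    refine Finset.sum_congr rfl fun j hj => ?_
    rw [show ∀ f : ℕ+ → ℝ, ∑ k ∈ S, (if j = k then -(1/4:ℝ) else 0) * f k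
        = ∑ k ∈ S, (if j = k then -(1/4:ℝ) * f k else 0) from fun f =>
      Finset.sum_congr rfl fun k _ => by split <;> simp]
    rw [Finset.sum_ite_eq S j (fun k => -(1/4:ℝ) * (cfd a b m j t * (starRingEnd ℂ) (cfd a b m k t)).re),
      if_pos hj, re_mul_conj]
    ring
  -- first piece
  have hA : ∑ j ∈ S, ∑ k ∈ S, (G j k * ((k:ℝ)*π) * (-(lam m j)^2))
        * (cf a b m j t * (starRingEnd ℂ) (cf a b m k t)).re
      = (1/2)*‖FF a b m S t‖^2
        - (π^2/4) * ∑ k ∈ S, ((k:ℝ)^2-(m:ℝ)^2)*‖cf a b m k t‖^2 := by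
    rw [sym_sum S _ (fun j k => (π^2/2)*((j:ℝ)*(k:ℝ))
        + (if j = k then -(π^2/4)*((k:ℝ)^2-(m:ℝ)^2) else 0)) _
      (fun j k => re_mul_conj_comm _ _) (fun j _ k _ => cond2 m j k)]
    have hs : ∑ j ∈ S, ∑ k ∈ S, ((π^2/2)*((j:ℝ)*(k:ℝ))
          + (if j = k then -(π^2/4)*((k:ℝ)^2-(m:ℝ)^2) else 0))
            * (cf a b m j t * (starRingEnd ℂ) (cf a b m k t)).re
        = (∑ j ∈ S, ∑ k ∈ S, ((π^2/2)*((j:ℝ)*(k:ℝ)))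
            * (cf a b m j t * (starRingEnd ℂ) (cf a b m k t)).re)
          + ∑ j ∈ S, ∑ k ∈ S, (if j = k then -(π^2/4)*((k:ℝ)^2-(m:ℝ)^2) else 0)
            * (cf a b m j t * (starRingEnd ℂ) (cf a b m k t)).re := by
      rw [← Finset.sum_add_distrib]
      refine Finset.sum_congr rfl fun j _ => ?_
      rw [← Finset.sum_add_distrib]
      exact Finset.sum_congr rfl fun k _ => by rw [add_mul]
    rw [hs]
    have h1 : ∑ j ∈ S, ∑ k ∈ S, ((π^2/2)*((j:ℝ)*(k:ℝ)))
          * (cf a b m j t * (starRingEnd ℂ) (cf a b m k t)).re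
        = (1/2)*‖FF a b m S t‖^2 := by
      rw [normsq_FF, Finset.mul_sum]
      refine Finset.sum_congr rfl fun j _ => ?_
      rw [Finset.mul_sum]
      exact Finset.sum_congr rfl fun k _ => by ring
    have h2 : ∑ j ∈ S, ∑ k ∈ S, (if j = k then -(π^2/4)*((k:ℝ)^2-(m:ℝ)^2) else 0)
          * (cf a b m j t * (starRingEnd ℂ) (cf a b m k t)).re
        = -((π^2/4) * ∑ k ∈ S, ((k:ℝ)^2-(m:ℝ)^2)*‖cf a b m k t‖^2) := by
      rw [Finset.mul_sum, ← Finset.sum_neg_distrib]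
      refine Finset.sum_congr rfl fun j hj => ?_
      rw [show ∑ k ∈ S, (if j = k then -(π^2/4)*((k:ℝ)^2-(m:ℝ)^2) else 0)
            * (cf a b m j t * (starRingEnd ℂ) (cf a b m k t)).re
          = ∑ k ∈ S, (if j = k then (-(π^2/4)*((k:ℝ)^2-(m:ℝ)^2))
            * (cf a b m j t * (starRingEnd ℂ) (cf a b m k t)).re else 0) from
        Finset.sum_congr rfl fun k _ => by split <;> simp]
      rw [Finset.sum_ite_eq S j, if_pos hj, re_mul_conj]
      ring
    rw [h1, h2]
    ring
  rw [hA, hB]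
  ring


variable (a b : ℕ+ → ℂ) (m : ℕ+)

lemma cont_FF (S : Finset ℕ+) : Continuous (fun t => FF a b m S t) := by
  unfold FF
  exact continuous_finset_sum _ fun k _ => continuous_const.mul (cont_cf a b m k)

lemma hasDerivAt_XX (S : Finset ℕ+) (t : ℝ) :
    HasDerivAt (fun s => XX a b m S s)
      ((1/2)*‖FF a b m S t‖^2
        - ((π^2/4) * ∑ k ∈ S, ((k:ℝ)^2-(m:ℝ)^2)*‖cf a b m k t‖^2
            + (1/4) * ∑ k ∈ S, ‖cfd a b m k t‖^2)) t := by
  rw [← deriv_value a b m S t]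
  unfold XX
  refine HasDerivAt.fun_sum fun j _ => HasDerivAt.fun_sum fun k _ => ?_
  have hmul := (hasDerivAt_cfd a b m j t).mul (hasDerivAt_conj_cf a b m k t)
  have hre := Complex.reCLM.hasFDerivAt.comp_hasDerivAt t hmul
  exact hre.const_mul _

set_option maxHeartbeats 1000000 in
theorem core (T : ℝ) (hT : 0 < T) (S : Finset ℕ+) :
    ∫ t in (0:ℝ)..T, ‖FF a b m S t‖^2
      ≤ (4 + 2*T) * ∑ k ∈ S, π^2*((k:ℝ)^2+(m:ℝ)^2)*(‖a k‖^2+‖b k‖^2) := by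
  set Q := ∑ k ∈ S, π^2*((k:ℝ)^2+(m:ℝ)^2)*(‖a k‖^2+‖b k‖^2) with hQdef
  have hQnn : 0 ≤ Q := Finset.sum_nonneg fun k _ => by positivity
  have hcF : Continuous (fun t => FF a b m S t) := by
    unfold FF
    exact continuous_finset_sum _ fun k _ => continuous_const.mul (cont_cf a b m k)
  have hcW : Continuous (fun t => (π^2/4) * ∑ k ∈ S, ((k:ℝ)^2-(m:ℝ)^2)*‖cf a b m k t‖^2
      + (1/4) * ∑ k ∈ S, ‖cfd a b m k t‖^2) := by
    apply Continuous.add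
    · exact continuous_const.mul (continuous_finset_sum _ fun k _ =>
        continuous_const.mul ((cont_cf a b m k).norm.pow 2))
    · exact continuous_const.mul (continuous_finset_sum _ fun k _ => ((cont_cfd a b m k).norm.pow 2))
  have hcF2 : Continuous (fun t => (1/2)*‖FF a b m S t‖^2) := continuous_const.mul (hcF.norm.pow 2)
  -- FTC
  have hFTC : ∫ t in (0:ℝ)..T, ((1/2)*‖FF a b m S t‖^2
      - ((π^2/4) * ∑ k ∈ S, ((k:ℝ)^2-(m:ℝ)^2)*‖cf a b m k t‖^2
          + (1/4) * ∑ k ∈ S, ‖cfd a b m k t‖^2))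
      = XX a b m S T - XX a b m S 0 :=
    integral_eq_sub_of_hasDerivAt (fun t _ => hasDerivAt_XX a b m S t)
      ((hcF2.sub hcW).intervalIntegrable _ _)
  rw [intervalIntegral.integral_sub (hcF2.intervalIntegrable _ _) (hcW.intervalIntegrable _ _)] at hFTC
  -- bounds on the W part
  have hWQ : ∀ t : ℝ, (π^2/4) * ∑ k ∈ S, ((k:ℝ)^2-(m:ℝ)^2)*‖cf a b m k t‖^2
      + (1/4) * ∑ k ∈ S, ‖cfd a b m k t‖^2 ≤ Q := by
    intro t
    have hmerge : (π^2/4) * ∑ k ∈ S, ((k:ℝ)^2-(m:ℝ)^2)*‖cf a b m k t‖^2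
        + (1/4) * ∑ k ∈ S, ‖cfd a b m k t‖^2
        = ∑ k ∈ S, ((π^2/4)*(((k:ℝ)^2-(m:ℝ)^2)*‖cf a b m k t‖^2) + (1/4)*‖cfd a b m k t‖^2) := by
      rw [Finset.mul_sum, Finset.mul_sum, ← Finset.sum_add_distrib]
    rw [hmerge, hQdef]
    refine Finset.sum_le_sum fun k _ => ?_
    have h1 := norm_cf_le a b m k t
    have h2 := norm_cfd_le a b m k t
    have h3 := lam_sq m k
    have h4 := lam_nonneg m k
    have hA := norm_nonneg (a k)
    have hB := norm_nonneg (b k)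
    have hC := norm_nonneg (cf a b m k t)
    have hD := norm_nonneg (cfd a b m k t)
    have hc2 : ‖cf a b m k t‖^2 ≤ 2*(‖a k‖^2+‖b k‖^2) := by nlinarith [sq_nonneg (‖a k‖-‖b k‖)]
    have hd2 : ‖cfd a b m k t‖^2 ≤ (lam m k)^2*(2*(‖a k‖^2+‖b k‖^2)) := by
      have hlab : 0 ≤ lam m k * (‖a k‖+‖b k‖) := mul_nonneg h4 (by linarith)
      nlinarith [sq_nonneg (‖a k‖-‖b k‖), sq_nonneg (lam m k)]
    have hππ : (0:ℝ) ≤ π^2 := sq_nonneg π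
    have hmm : (0:ℝ) ≤ (m:ℝ)^2 := sq_nonneg _
    calc (π^2/4)*(((k:ℝ)^2-(m:ℝ)^2)*‖cf a b m k t‖^2) + (1/4)*‖cfd a b m k t‖^2
        ≤ (π^2/4)*(((k:ℝ)^2+(m:ℝ)^2)*(2*(‖a k‖^2+‖b k‖^2)))
          + (1/4)*((lam m k)^2*(2*(‖a k‖^2+‖b k‖^2))) := by
          have e1 : ((k:ℝ)^2-(m:ℝ)^2)*‖cf a b m k t‖^2 ≤ ((k:ℝ)^2+(m:ℝ)^2)*(2*(‖a k‖^2+‖b k‖^2)) := by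
            have e1a : ((k:ℝ)^2-(m:ℝ)^2)*‖cf a b m k t‖^2 ≤ ((k:ℝ)^2+(m:ℝ)^2)*‖cf a b m k t‖^2 := by
              nlinarith [mul_nonneg hmm (sq_nonneg ‖cf a b m k t‖)]
            have e1b : ((k:ℝ)^2+(m:ℝ)^2)*‖cf a b m k t‖^2 ≤ ((k:ℝ)^2+(m:ℝ)^2)*(2*(‖a k‖^2+‖b k‖^2)) :=
              mul_le_mul_of_nonneg_left hc2 (by positivity)
            linarith
          have e1' := mul_le_mul_of_nonneg_left e1 (by positivity : (0:ℝ) ≤ π^2/4)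
          linarith
      _ = π^2*((k:ℝ)^2+(m:ℝ)^2)*(‖a k‖^2+‖b k‖^2) := by rw [h3]; ring
  -- bound on |XX|
  have hXb : ∀ t : ℝ, |XX a b m S t| ≤ Q := by
    intro t
    refine le_trans (X_le S (fun k => cfd a b m k t) (fun k => cf a b m k t)) ?_
    have s1 : ∑ k ∈ S, ‖cfd a b m k t‖^2 ≤ 2*Q := by
      rw [hQdef, Finset.mul_sum]
      refine Finset.sum_le_sum fun k _ => ?_
      have h2 := norm_cfd_le a b m k t
      have h3 := lam_sq m k
      have h4 := lam_nonneg m k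
      have hlab : 0 ≤ lam m k * (‖a k‖+‖b k‖) :=
        mul_nonneg h4 (by linarith [norm_nonneg (a k), norm_nonneg (b k)])
      nlinarith [sq_nonneg (‖a k‖-‖b k‖), norm_nonneg (cfd a b m k t), sq_nonneg (lam m k),
        norm_nonneg (a k), norm_nonneg (b k)]
    have s2 : ∑ k ∈ S, ((k:ℝ)*π)^2 * ‖cf a b m k t‖^2 ≤ 2*Q := by
      rw [hQdef, Finset.mul_sum]
      refine Finset.sum_le_sum fun k _ => ?_
      have h1 := norm_cf_le a b m k t
      have hc2 : ‖cf a b m k t‖^2 ≤ 2*(‖a k‖^2+‖b k‖^2) := by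
        nlinarith [sq_nonneg (‖a k‖-‖b k‖), norm_nonneg (cf a b m k t),
          norm_nonneg (a k), norm_nonneg (b k)]
      have hkm : ((k:ℝ)*π)^2 ≤ π^2*((k:ℝ)^2+(m:ℝ)^2) := by nlinarith [sq_nonneg ((m:ℝ)*π)]
      have hkp : (0:ℝ) ≤ ((k:ℝ)*π)^2 := sq_nonneg _
      nlinarith [sq_nonneg (k:ℝ), sq_nonneg π, sq_nonneg (m:ℝ), norm_nonneg (cf a b m k t),
        mul_nonneg (mul_nonneg (sq_nonneg π) (by positivity : (0:ℝ) ≤ (k:ℝ)^2+(m:ℝ)^2))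
          (sq_nonneg ‖cf a b m k t‖)]
    linarith
  -- integral of W bounded
  have hWint : ∫ t in (0:ℝ)..T, ((π^2/4) * ∑ k ∈ S, ((k:ℝ)^2-(m:ℝ)^2)*‖cf a b m k t‖^2
      + (1/4) * ∑ k ∈ S, ‖cfd a b m k t‖^2) ≤ T*Q := by
    have := intervalIntegral.integral_mono_on hT.le (hcW.intervalIntegrable 0 T)
      (_root_.intervalIntegrable_const (μ := MeasureTheory.volume) (c := Q)) (fun t _ => hWQ t)
    simpa [smul_eq_mul] using this
  have hhalf : ∫ t in (0:ℝ)..T, (1/2)*‖FF a b m S t‖^2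
      = (1/2) * ∫ t in (0:ℝ)..T, ‖FF a b m S t‖^2 := intervalIntegral.integral_const_mul _ _
  have hXT := abs_le.mp (hXb T)
  have hX0 := abs_le.mp (hXb 0)
  rw [hhalf] at hFTC
  linarith



/-- hidden regularity (direct) inequality for the wave equation
on the unit square observed on the side `Γ₀ = {0} × (0,1)`, for any `T > 0`. -/
theorem direct_inequality_square (T : ℝ) (hT : 0 < T) :
    ∃ C > 0, ∀ α β : ℕ+ × ℕ+ → ℂ,
      (Function.support α).Finite → (Function.support β).Finite →
      ∫ t in (0 : ℝ)..T, ∫ x₂ in (0 : ℝ)..(1 : ℝ),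
          ‖deriv (fun x₁ : ℝ => waveSol α β x₁ x₂ t) 0‖ ^ 2
        ≤ C * ∑ᶠ k : ℕ+ × ℕ+,
            ((k.1 : ℝ) ^ 2 + (k.2 : ℝ) ^ 2) * (‖α k‖ ^ 2 + ‖β k‖ ^ 2) := by
  refine ⟨(2+T)*π^2, by positivity, ?_⟩
  intro α β hα hβ
  classical
  set S : Finset (ℕ+ × ℕ+) := (hα.union hβ).toFinset with hSdef
  have hmemS : ∀ k : ℕ+ × ℕ+, α k ≠ 0 ∨ β k ≠ 0 → k ∈ S := by
    intro k hk
    rw [hSdef, Set.Finite.mem_toFinset]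
    rcases hk with h | h
    · exact Or.inl h
    · exact Or.inr h
  -- the time-dependent coefficient
  set C1 : (ℕ+ × ℕ+) → ℝ → ℂ := fun k t =>
    α k * Complex.exp (Complex.I * (waveFreq k : ℂ) * (t : ℂ))
      + β k * Complex.exp (-(Complex.I * (waveFreq k : ℂ) * (t : ℂ))) with hC1def
  set w : (ℕ+ × ℕ+) → ℝ → ℂ := fun k t => C1 k t * (((k.1:ℝ)*π : ℝ) : ℂ) with hwdef
  -- Step A : compute the derivative
  have hA : ∀ (x₂ t : ℝ), deriv (fun x₁ : ℝ => waveSol α β x₁ x₂ t) 0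
      = ∑ k ∈ S, w k t * (Real.sin (((k.2:ℕ):ℝ)*π*x₂) : ℂ) := by
    intro x₂ t
    have hW : (fun x₁ : ℝ => waveSol α β x₁ x₂ t) = fun x₁ : ℝ => ∑ k ∈ S,
        C1 k t * (Real.sin ((k.1 : ℝ) * Real.pi * x₁) : ℂ) * (Real.sin ((k.2 : ℝ) * Real.pi * x₂) : ℂ) := by
      funext x₁
      apply finsum_eq_sum_of_support_subset
      intro k hk
      simp only [Function.mem_support] at hk
      have : α k ≠ 0 ∨ β k ≠ 0 := by
        by_contra hcon
        push_neg at hcon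
        apply hk
        rw [hcon.1, hcon.2]
        ring
      exact_mod_cast hmemS k this
    rw [hW]
    have hterm : ∀ k ∈ S, HasDerivAt (fun x₁ : ℝ =>
        C1 k t * (Real.sin ((k.1 : ℝ) * Real.pi * x₁) : ℂ) * (Real.sin ((k.2 : ℝ) * Real.pi * x₂) : ℂ))
        (w k t * (Real.sin (((k.2:ℕ):ℝ)*π*x₂) : ℂ)) 0 := by
      intro k _
      have hs : HasDerivAt (fun x₁ : ℝ => Real.sin ((k.1 : ℝ) * Real.pi * x₁)) ((k.1:ℝ)*π) 0 := by
        have hlin : HasDerivAt (fun x₁ : ℝ => (k.1 : ℝ) * Real.pi * x₁) ((k.1:ℝ)*π) 0 := by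
          simpa using (hasDerivAt_id (0:ℝ)).const_mul ((k.1 : ℝ) * Real.pi)
        have := (Real.hasDerivAt_sin ((k.1 : ℝ) * Real.pi * 0)).comp 0 hlin
        simpa [Function.comp_def] using this
      have hsC := hs.ofReal_comp
      have := (hsC.const_mul (C1 k t)).mul_const ((Real.sin ((k.2 : ℝ) * Real.pi * x₂) : ℂ))
      simpa [hwdef] using this
    exact (HasDerivAt.fun_sum hterm).deriv
  -- fibers
  set M : Finset ℕ+ := S.image Prod.snd with hMdef
  set Sm : ℕ+ → Finset (ℕ+ × ℕ+) := fun mm => S.filter (fun k => k.2 = mm) with hSmdef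
  set a' : ℕ+ → ℕ+ → ℂ := fun mm k1 => α (k1, mm) with ha'def
  set b' : ℕ+ → ℕ+ → ℂ := fun mm k1 => β (k1, mm) with hb'def
  set S' : ℕ+ → Finset ℕ+ := fun mm => (Sm mm).image Prod.fst with hS'def
  have hinj : ∀ mm : ℕ+, ∀ x ∈ Sm mm, ∀ y ∈ Sm mm, x.1 = y.1 → x = y := by
    intro mm x hx y hy h1
    rw [hSmdef] at hx hy
    simp only [Finset.mem_filter] at hx hy
    exact Prod.ext h1 (hx.2.trans hy.2.symm)
  have hcf_eq : ∀ mm : ℕ+, ∀ k ∈ Sm mm, ∀ t : ℝ, cf (a' mm) (b' mm) mm k.1 t = C1 k t := by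
    intro mm k hk t
    rw [hSmdef] at hk
    simp only [Finset.mem_filter] at hk
    have hk2 : k.2 = mm := hk.2
    have hke : (k.1, mm) = k := Prod.ext rfl hk2.symm
    have hlam : lam mm k.1 = waveFreq k := by
      rw [lam, waveFreq, ← hk2]
    rw [cf, ha'def, hb'def, hC1def]
    simp only [hke, hlam]
  have hFFm : ∀ mm : ℕ+, ∀ t : ℝ, (∑ k ∈ Sm mm, w k t) = FF (a' mm) (b' mm) mm (S' mm) t := by
    intro mm t
    rw [FF, hS'def, Finset.sum_image (fun x hx y hy h => hinj mm x hx y hy h)]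
    refine Finset.sum_congr rfl fun k hk => ?_
    rw [hcf_eq mm k hk t, hwdef]
    ring
  have hQm : ∀ mm : ℕ+, (∑ k1 ∈ S' mm, π^2*((k1:ℝ)^2+(mm:ℝ)^2)*(‖a' mm k1‖^2+‖b' mm k1‖^2))
      = ∑ k ∈ Sm mm, π^2*(((k.1:ℕ):ℝ)^2+((k.2:ℕ):ℝ)^2)*(‖α k‖^2+‖β k‖^2) := by
    intro mm
    rw [hS'def, Finset.sum_image (fun x hx y hy h => hinj mm x hx y hy h)]
    refine Finset.sum_congr rfl fun k hk => ?_
    rw [hSmdef] at hk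
    simp only [Finset.mem_filter] at hk
    have hk2 : k.2 = mm := hk.2
    have hke : (k.1, mm) = k := Prod.ext rfl hk2.symm
    rw [ha'def, hb'def]
    simp only [hke, ← hk2]
  -- step B : spatial orthogonality
  have hnormsq : ∀ (t : ℝ) (mm : ℕ+), ‖∑ k ∈ Sm mm, w k t‖^2
      = ∑ j ∈ Sm mm, ∑ k ∈ Sm mm, (w j t * (starRingEnd ℂ) (w k t)).re := by
    intro t mm
    rw [← re_mul_conj, map_sum, Finset.sum_mul_sum, Complex.re_sum]
    exact Finset.sum_congr rfl fun j _ => Complex.re_sum _ _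
  have hB : ∀ t : ℝ, (∫ x₂ in (0:ℝ)..1, ‖∑ k ∈ S, w k t * (Real.sin (((k.2:ℕ):ℝ)*π*x₂) : ℂ)‖^2)
      = ∑ mm ∈ M, (1/2)*‖∑ k ∈ Sm mm, w k t‖^2 := by
    intro t
    rw [L2sin S (fun k => w k t) Prod.snd]
    rw [← Finset.sum_fiberwise_of_maps_to (fun k hk => Finset.mem_image_of_mem Prod.snd hk)
      (fun j => ∑ k ∈ S, (if j.2 = k.2 then (1/2:ℝ) else 0) * (w j t * (starRingEnd ℂ) (w k t)).re)]
    refine Finset.sum_congr rfl fun mm _ => ?_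
    rw [hnormsq t mm, Finset.mul_sum]
    refine Finset.sum_congr rfl fun j hj => ?_
    have hj2 : j.2 = mm := by
      rw [hSmdef] at hj
      exact (Finset.mem_filter.mp hj).2
    rw [Finset.mul_sum, hSmdef, Finset.sum_filter]
    refine Finset.sum_congr rfl fun k _ => ?_
    by_cases h : k.2 = mm
    · rw [if_pos h, if_pos (hj2.trans h.symm)]
    · rw [if_neg h, if_neg (fun hc : j.2 = k.2 => h (hc.symm.trans hj2)), zero_mul]
  -- pointwise description of the inner integral
  have hΦ : ∀ t : ℝ, (∫ x₂ in (0:ℝ)..1, ‖deriv (fun x₁ : ℝ => waveSol α β x₁ x₂ t) 0‖ ^ 2)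
      = ∑ mm ∈ M, (1/2)*‖FF (a' mm) (b' mm) mm (S' mm) t‖^2 := by
    intro t
    have : (fun x₂ => ‖deriv (fun x₁ : ℝ => waveSol α β x₁ x₂ t) 0‖ ^ 2)
        = fun x₂ => ‖∑ k ∈ S, w k t * (Real.sin (((k.2:ℕ):ℝ)*π*x₂) : ℂ)‖^2 := by
      funext x₂
      rw [hA x₂ t]
    rw [this, hB t]
    exact Finset.sum_congr rfl fun mm _ => by rw [hFFm mm t]
  rw [intervalIntegral.integral_congr (g := fun t => ∑ mm ∈ M, (1/2)*‖FF (a' mm) (b' mm) mm (S' mm) t‖^2)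
    (fun t _ => hΦ t)]
  rw [intervalIntegral.integral_finset_sum (f := fun mm t => (1/2)*‖FF (a' mm) (b' mm) mm (S' mm) t‖^2) (fun mm _ =>
    ((continuous_const.mul (((cont_FF (a' mm) (b' mm) mm (S' mm))).norm.pow 2)).intervalIntegrable 0 T))]
  -- finsum on the right-hand side
  have hRHS : ∑ᶠ k : ℕ+ × ℕ+, ((k.1 : ℝ) ^ 2 + (k.2 : ℝ) ^ 2) * (‖α k‖ ^ 2 + ‖β k‖ ^ 2)
      = ∑ k ∈ S, (((k.1:ℕ) : ℝ) ^ 2 + ((k.2:ℕ) : ℝ) ^ 2) * (‖α k‖ ^ 2 + ‖β k‖ ^ 2) := by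
    apply finsum_eq_sum_of_support_subset
    intro k hk
    simp only [Function.mem_support] at hk
    have : α k ≠ 0 ∨ β k ≠ 0 := by
      by_contra hcon
      push_neg at hcon
      apply hk
      rw [hcon.1, hcon.2]
      simp
    exact_mod_cast hmemS k this
  rw [hRHS]
  calc ∑ mm ∈ M, ∫ t in (0:ℝ)..T, (1/2)*‖FF (a' mm) (b' mm) mm (S' mm) t‖^2
      ≤ ∑ mm ∈ M, (2+T) * (∑ k ∈ Sm mm, π^2*(((k.1:ℕ):ℝ)^2+((k.2:ℕ):ℝ)^2)*(‖α k‖^2+‖β k‖^2)) := by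
        refine Finset.sum_le_sum fun mm hmm => ?_
        rw [intervalIntegral.integral_const_mul]
        have hc := core (a' mm) (b' mm) mm T hT (S' mm)
        rw [hQm mm] at hc
        have h2 := mul_le_mul_of_nonneg_left hc (by norm_num : (0:ℝ) ≤ 1/2)
        calc (1/2) * ∫ t in (0:ℝ)..T, ‖FF (a' mm) (b' mm) mm (S' mm) t‖^2
            ≤ (1/2)*((4+2*T) * ∑ k ∈ Sm mm, π^2*(((k.1:ℕ):ℝ)^2+((k.2:ℕ):ℝ)^2)*(‖α k‖^2+‖β k‖^2)) := h2
          _ = (2+T) * (∑ k ∈ Sm mm, π^2*(((k.1:ℕ):ℝ)^2+((k.2:ℕ):ℝ)^2)*(‖α k‖^2+‖β k‖^2)) := by ring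
    _ = (2+T)*π^2 * ∑ k ∈ S, (((k.1:ℕ) : ℝ) ^ 2 + ((k.2:ℕ) : ℝ) ^ 2) * (‖α k‖ ^ 2 + ‖β k‖ ^ 2) := by
        rw [← Finset.mul_sum, Finset.sum_fiberwise_of_maps_to (fun k hk => Finset.mem_image_of_mem Prod.snd hk)
          (fun k : ℕ+ × ℕ+ => π^2*(((k.1:ℕ):ℝ)^2+((k.2:ℕ):ℝ)^2)*(‖α k‖^2+‖β k‖^2))]
        rw [Finset.mul_sum, Finset.mul_sum]
        exact Finset.sum_congr rfl fun k _ => by ring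
end
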